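/- Let n, r be positive integers with r ≤ n, let U* ∈ ℝ^{n×r}, Δ ∈ ℝ^{n×n}, M = U* U*ᵀ + Δ, Ω = {(i,j) ∈ [n]×[n] : M_{ij} ≥ 0}, and F(U) = (1/4)‖(U Uᵀ − M)_Ω‖_F². Suppose Assumption 3 holds with K index sets and constant λ > 0. Let U ∈ ℝ^{n×r} be any global minimizer of F and define c₀ = √(8K) · ( √λ + 2‖Δ‖_F^{1/2} + ‖U*‖ + K‖U*‖·(3 + (2/λ)‖Δ‖_F) ). Then there exists an orthogonal matrix Q ∈ ℝ^{r×r} (QᵀQ = I_r) such that ‖U − U* Q‖_F ≤ (c₀/λ) · ‖Δ‖_F. -/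

import Mathlib

open Matrix Classical

noncomputable section

/-- Frobenius norm of a real matrix. -/
def frobNorm {m k : Type*} [Fintype m] [Fintype k] (A : Matrix m k ℝ) : ℝ :=
  Real.sqrt (∑ i, ∑ j, (A i j) ^ 2)

/-- Frobenius (trace) inner product ⟨A, B⟩ = trace(Aᵀ B). -/
def frobInner {m k : Type*} [Fintype m] [Fintype k] (A B : Matrix m k ℝ) : ℝ :=
  ∑ i, ∑ j, A i j * B i j

/-- Spectral norm (largest singular value): the supremum of `‖A x‖` over unit vectors. -/
def specNorm {m k : Type*} [Fintype m] [Fintype k] (A : Matrix m k ℝ) : ℝ :=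
  sSup {c : ℝ | ∃ x : k → ℝ, ∑ j, x j ^ 2 = 1 ∧ c = Real.sqrt (∑ i, (A.mulVec x i) ^ 2)}

/-- `(X)_Ω`: keep entries in `Ω`, zero out the rest. -/
def mask {m : Type*} (Ω : Set (m × m)) (X : Matrix m m ℝ) : Matrix m m ℝ :=
  Matrix.of fun i j => if (i, j) ∈ Ω then X i j else 0

/-- ReLU sampling set: the nonnegative entries of `M`. -/
def reluSet {n : ℕ} (M : Matrix (Fin n) (Fin n) ℝ) : Set (Fin n × Fin n) :=
  {p | 0 ≤ M p.1 p.2}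

/-- The objective `F(U) = (1/4) ‖(U Uᵀ − M)_Ω‖_F²`. -/
def objF {n r : ℕ} (Ω : Set (Fin n × Fin n)) (M : Matrix (Fin n) (Fin n) ℝ)
    (U : Matrix (Fin n) (Fin r) ℝ) : ℝ :=
  (1 / 4) * frobNorm (mask Ω (U * Uᵀ - M)) ^ 2

/-- Assumption 3: index sets `I_1, …, I_K ⊆ [n]` with
(a) they cover `[n]`; (b) each diagonal block `I_k × I_k` is observed;
(c) `U*_kᵀ U*_k ⪰ λ I_r` for each `k` (stated as a quadratic-form lower bound);
(d) any two index sets are connected by a path of fully observed off-diagonal blocks. -/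
def Assumption3 {n r : ℕ} (U : Matrix (Fin n) (Fin r) ℝ) (Ω : Set (Fin n × Fin n))
    (K : ℕ) (I : Fin K → Finset (Fin n)) (lam : ℝ) : Prop :=
  (∀ i : Fin n, ∃ k : Fin K, i ∈ I k) ∧
    (∀ k : Fin K, ∀ a ∈ I k, ∀ b ∈ I k, (a, b) ∈ Ω) ∧
    (∀ k : Fin K, ∀ x : Fin r → ℝ,
      lam * ∑ j, x j ^ 2 ≤ ∑ i ∈ I k, (∑ j, U i j * x j) ^ 2) ∧
    (∀ k l : Fin K, k ≠ l → ∃ s : ℕ, ∃ p : Fin (s + 1) → Fin K,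
      p 0 = k ∧ p (Fin.last s) = l ∧
        ∀ j : Fin s, ∀ a ∈ I (Fin.castSucc j |> p), ∀ b ∈ I (p j.succ), (a, b) ∈ Ω)

/-- The constant `c₀ = √(8K) (√λ + 2‖Δ‖_F^{1/2} + ‖U*‖ + K‖U*‖(3 + (2/λ)‖Δ‖_F))`. -/
def cZero {n r : ℕ} (K : ℕ) (lam : ℝ) (Ustar : Matrix (Fin n) (Fin r) ℝ)
    (Δ : Matrix (Fin n) (Fin n) ℝ) : ℝ :=
  Real.sqrt (8 * K) *
    (Real.sqrt lam + 2 * Real.sqrt (frobNorm Δ) + specNorm Ustar +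
      K * specNorm Ustar * (3 + (2 / lam) * frobNorm Δ))

namespace St11

variable {m k l q : Type*} [Fintype m] [Fintype k] [Fintype l] [Fintype q]

def vnorm2 {k : Type*} [Fintype k] (x : k → ℝ) : ℝ := ∑ j, x j ^ 2

lemma vnorm2_nonneg (x : k → ℝ) : 0 ≤ vnorm2 x := Finset.sum_nonneg fun _ _ => sq_nonneg _

lemma frobInner_self (A : Matrix m k ℝ) : frobInner A A = ∑ i, ∑ j, (A i j)^2 := by
  simp [frobInner, sq]

lemma frobInner_self_nonneg (A : Matrix m k ℝ) : 0 ≤ frobInner A A := by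
  rw [frobInner_self]
  exact Finset.sum_nonneg fun _ _ => Finset.sum_nonneg fun _ _ => sq_nonneg _

lemma frobNorm_nonneg (A : Matrix m k ℝ) : 0 ≤ frobNorm A := Real.sqrt_nonneg _

lemma sq_frobNorm (A : Matrix m k ℝ) : frobNorm A ^ 2 = frobInner A A := by
  rw [frobNorm, Real.sq_sqrt (by rw [← frobInner_self]; exact frobInner_self_nonneg A)]
  exact (frobInner_self A).symm

lemma frobNorm_eq_sqrt_inner (A : Matrix m k ℝ) : frobNorm A = Real.sqrt (frobInner A A) := by
  rw [frobNorm, frobInner_self]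

lemma frobNorm_le_of_sq_le {A : Matrix m k ℝ} {c : ℝ} (hc : 0 ≤ c)
    (h : frobInner A A ≤ c ^ 2) : frobNorm A ≤ c := by
  rw [frobNorm_eq_sqrt_inner]
  calc Real.sqrt (frobInner A A) ≤ Real.sqrt (c^2) := Real.sqrt_le_sqrt h
  _ = c := by rw [Real.sqrt_sq hc]

lemma frobInner_comm (A B : Matrix m k ℝ) : frobInner A B = frobInner B A := by
  simp [frobInner, mul_comm]

lemma frobInner_eq_trace (A B : Matrix m k ℝ) : frobInner A B = (Aᵀ * B).trace := by
  rw [frobInner, Matrix.trace]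
  rw [Finset.sum_comm]
  simp [Matrix.diag, Matrix.mul_apply, Matrix.transpose_apply]

lemma frobInner_add_left (A B C : Matrix m k ℝ) :
    frobInner (A + B) C = frobInner A C + frobInner B C := by
  simp [frobInner, Matrix.add_apply, add_mul, Finset.sum_add_distrib]

lemma frobInner_add_right (A B C : Matrix m k ℝ) :
    frobInner A (B + C) = frobInner A B + frobInner A C := by
  simp [frobInner, Matrix.add_apply, mul_add, Finset.sum_add_distrib]

lemma frobInner_sub_left (A B C : Matrix m k ℝ) :
    frobInner (A - B) C = frobInner A C - frobInner B C := by
  simp [frobInner, Matrix.sub_apply, sub_mul, Finset.sum_sub_distrib]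

lemma frobInner_sub_right (A B C : Matrix m k ℝ) :
    frobInner A (B - C) = frobInner A B - frobInner A C := by
  simp [frobInner, Matrix.sub_apply, mul_sub, Finset.sum_sub_distrib]

lemma frobInner_neg_right (A B : Matrix m k ℝ) : frobInner A (-B) = - frobInner A B := by
  simp [frobInner, Finset.sum_neg_distrib]

lemma frobNorm_neg (A : Matrix m k ℝ) : frobNorm (-A) = frobNorm A := by
  simp [frobNorm]

lemma frobNorm_transpose (A : Matrix m k ℝ) : frobNorm Aᵀ = frobNorm A := by
  rw [frobNorm, frobNorm, Finset.sum_comm]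
  simp [Matrix.transpose_apply]

lemma frobInner_transpose (A B : Matrix m k ℝ) : frobInner Aᵀ Bᵀ = frobInner A B := by
  rw [frobInner, frobInner, Finset.sum_comm]
  simp [Matrix.transpose_apply]

lemma abs_frobInner_le (A B : Matrix m k ℝ) : |frobInner A B| ≤ frobNorm A * frobNorm B := by
  have h := Finset.sum_mul_sq_le_sq_mul_sq Finset.univ (fun p : m × k => A p.1 p.2)
    (fun p : m × k => B p.1 p.2)
  have e1 : frobInner A B = ∑ p : m × k, A p.1 p.2 * B p.1 p.2 := by
    rw [frobInner]; exact (Fintype.sum_prod_type (fun p : m × k => A p.1 p.2 * B p.1 p.2)).symm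
  have e2 : frobNorm A = Real.sqrt (∑ p : m × k, (A p.1 p.2)^2) := by
    rw [frobNorm]; congr 1
    exact (Fintype.sum_prod_type (fun p : m × k => A p.1 p.2 ^ 2)).symm
  have e3 : frobNorm B = Real.sqrt (∑ p : m × k, (B p.1 p.2)^2) := by
    rw [frobNorm]; congr 1
    exact (Fintype.sum_prod_type (fun p : m × k => B p.1 p.2 ^ 2)).symm
  rw [e1, e2, e3]
  have := Real.sqrt_le_sqrt h
  rw [Real.sqrt_sq_eq_abs, Real.sqrt_mul (Finset.sum_nonneg fun _ _ => sq_nonneg _)] at this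
  exact this

lemma frobInner_le (A B : Matrix m k ℝ) : frobInner A B ≤ frobNorm A * frobNorm B :=
  le_trans (le_abs_self _) (abs_frobInner_le A B)

lemma frobNorm_add_le (A B : Matrix m k ℝ) : frobNorm (A + B) ≤ frobNorm A + frobNorm B := by
  apply frobNorm_le_of_sq_le (add_nonneg (frobNorm_nonneg A) (frobNorm_nonneg B))
  have : frobInner (A+B) (A+B) = frobInner A A + 2 * frobInner A B + frobInner B B := by
    rw [frobInner_add_left, frobInner_add_right, frobInner_add_right, frobInner_comm B A]; ring
  rw [this]
  have hAB := frobInner_le A B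
  have hA := sq_frobNorm A
  have hB := sq_frobNorm B
  nlinarith [frobNorm_nonneg A, frobNorm_nonneg B]

lemma frobNorm_sub_le (A B : Matrix m k ℝ) : frobNorm (A - B) ≤ frobNorm A + frobNorm B := by
  have := frobNorm_add_le A (-B)
  simpa [sub_eq_add_neg, frobNorm_neg] using this


lemma frobInner_mul_left (X : Matrix m k ℝ) (Y : Matrix k l ℝ) (Z : Matrix m l ℝ) :
    frobInner (X * Y) Z = frobInner Y (Xᵀ * Z) := by
  rw [frobInner_eq_trace, frobInner_eq_trace, Matrix.transpose_mul, Matrix.mul_assoc]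

lemma frobInner_mul_right (X : Matrix m k ℝ) (Y : Matrix k l ℝ) (Z : Matrix m l ℝ) :
    frobInner (X * Y) Z = frobInner X (Z * Yᵀ) := by
  rw [frobInner_eq_trace, frobInner_eq_trace, Matrix.transpose_mul,
    Matrix.mul_assoc, Matrix.trace_mul_comm, Matrix.mul_assoc]

lemma frobNorm_mul_orth {Q : Matrix k k ℝ} [DecidableEq k] (hQ : Qᵀ * Q = 1)
    (X : Matrix m k ℝ) : frobNorm (X * Q) = frobNorm X := by
  have hQ' : Q * Qᵀ = 1 := by
    have := mul_eq_one_comm.mpr hQ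
    exact this
  rw [frobNorm_eq_sqrt_inner, frobNorm_eq_sqrt_inner X]
  congr 1
  calc frobInner (X * Q) (X * Q) = frobInner X ((X * Q) * Qᵀ) := frobInner_mul_right X Q _
  _ = frobInner X X := by rw [Matrix.mul_assoc, hQ', Matrix.mul_one]

lemma vnorm2_eq_dot (x : k → ℝ) : vnorm2 x = x ⬝ᵥ x := by
  simp [vnorm2, dotProduct, sq]

/-- operator norm bound predicate -/
def OB {m k : Type*} [Fintype m] [Fintype k] (X : Matrix m k ℝ) (c : ℝ) : Prop :=
  0 ≤ c ∧ ∀ v : k → ℝ, vnorm2 (X *ᵥ v) ≤ c^2 * vnorm2 v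

lemma OB.frob_mul_left {X : Matrix m k ℝ} {c : ℝ} (h : OB X c) (Y : Matrix k l ℝ) :
    frobNorm (X * Y) ≤ c * frobNorm Y := by
  apply frobNorm_le_of_sq_le (mul_nonneg h.1 (frobNorm_nonneg Y))
  rw [frobInner_self, Finset.sum_comm]
  have key : ∀ j : l, ∑ i : m, ((X * Y) i j)^2 ≤ c^2 * ∑ t : k, (Y t j)^2 := by
    intro j
    have := h.2 (fun t => Y t j)
    simpa [vnorm2, Matrix.mulVec, Matrix.mul_apply, dotProduct] using this
  calc ∑ j, ∑ i, ((X * Y) i j)^2 ≤ ∑ j : l, c^2 * ∑ t : k, (Y t j)^2 :=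
        Finset.sum_le_sum fun j _ => key j
  _ = c^2 * ∑ j : l, ∑ t : k, (Y t j)^2 := by rw [Finset.mul_sum]
  _ = (c * frobNorm Y)^2 := by
      rw [mul_pow, sq_frobNorm, frobInner_self, Finset.sum_comm]

lemma OB.frob_mul_right {X : Matrix m k ℝ} {c : ℝ} (h : OB X c) (Y : Matrix l k ℝ) :
    frobNorm (Y * Xᵀ) ≤ c * frobNorm Y := by
  have := h.frob_mul_left Yᵀ
  rw [← frobNorm_transpose (Y * Xᵀ), Matrix.transpose_mul, Matrix.transpose_transpose]
  rw [← frobNorm_transpose Y]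
  exact this

lemma OB_of_frobNorm (X : Matrix m k ℝ) : OB X (frobNorm X) := by
  refine ⟨frobNorm_nonneg X, fun v => ?_⟩
  have key : ∀ i : m, ((X *ᵥ v) i)^2 ≤ (∑ j, (X i j)^2) * vnorm2 v := by
    intro i
    have := Finset.sum_mul_sq_le_sq_mul_sq Finset.univ (fun j => X i j) v
    simpa [vnorm2, Matrix.mulVec, dotProduct] using this
  calc vnorm2 (X *ᵥ v) ≤ ∑ i, (∑ j, (X i j)^2) * vnorm2 v :=
        Finset.sum_le_sum fun i _ => key i
  _ = (∑ i, ∑ j, (X i j)^2) * vnorm2 v := by rw [Finset.sum_mul]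
  _ = (frobNorm X)^2 * vnorm2 v := by
      rw [sq_frobNorm, frobInner_self]

lemma OB.mul {X : Matrix m k ℝ} {Y : Matrix k l ℝ} {c e : ℝ} (hX : OB X c) (hY : OB Y e) :
    OB (X * Y) (c * e) := by
  refine ⟨mul_nonneg hX.1 hY.1, fun v => ?_⟩
  rw [← Matrix.mulVec_mulVec]
  calc vnorm2 (X *ᵥ (Y *ᵥ v)) ≤ c^2 * vnorm2 (Y *ᵥ v) := hX.2 _
  _ ≤ c^2 * (e^2 * vnorm2 v) := by
      apply mul_le_mul_of_nonneg_left (hY.2 v) (sq_nonneg c)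
  _ = (c*e)^2 * vnorm2 v := by ring

lemma OB_orth {Q : Matrix k k ℝ} [DecidableEq k] (hQ : Qᵀ * Q = 1) : OB Q 1 := by
  refine ⟨zero_le_one, fun v => ?_⟩
  rw [vnorm2_eq_dot, Matrix.dotProduct_mulVec, Matrix.vecMul_mulVec, hQ,
    Matrix.vecMul_one]
  rw [← vnorm2_eq_dot]
  simp

lemma OB.mono {X : Matrix m k ℝ} {c e : ℝ} (h : OB X c) (hce : c ≤ e) : OB X e := by
  refine ⟨le_trans h.1 hce, fun v => ?_⟩
  exact le_trans (h.2 v) (mul_le_mul_of_nonneg_right (by nlinarith [h.1]) (vnorm2_nonneg v))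


set_option linter.unusedSectionVars false
section Square
variable [DecidableEq k]
open scoped MatrixOrder

lemma isHermitian_of_symm {M : Matrix k k ℝ} (h : Mᵀ = M) : M.IsHermitian := by
  ext i j
  calc Mᴴ i j = M j i := by simp [Matrix.conjTranspose_apply]
  _ = Mᵀ i j := (Matrix.transpose_apply M i j).symm
  _ = M i j := by rw [h]

lemma psd_of_quadratic {M : Matrix k k ℝ} (hsym : Mᵀ = M)
    (h : ∀ v : k → ℝ, 0 ≤ v ⬝ᵥ M *ᵥ v) : M.PosSemidef :=
  Matrix.PosSemidef.of_dotProduct_mulVec_nonneg (isHermitian_of_symm hsym) (fun x => by simpa using h x)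

lemma psd_quadratic {M : Matrix k k ℝ} (h : M.PosSemidef) (v : k → ℝ) :
    0 ≤ v ⬝ᵥ M *ᵥ v := by simpa using h.dotProduct_mulVec_nonneg v

lemma psd_transpose_eq {M : Matrix k k ℝ} (h : M.PosSemidef) : Mᵀ = M := by
  have := h.1
  unfold Matrix.IsHermitian at this
  ext i j
  calc Mᵀ i j = Mᴴ i j := by simp [Matrix.conjTranspose_apply, Matrix.transpose_apply]
  _ = M i j := by rw [this]

lemma psd_mul_transpose (A : Matrix m k ℝ) : (A * Aᵀ).PosSemidef := by
  have := Matrix.posSemidef_self_mul_conjTranspose A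
  simpa [Matrix.conjTranspose_eq_transpose_of_trivial] using this

lemma frobInner_X_mul_psd_nonneg (X : Matrix m k ℝ) {N : Matrix k k ℝ}
    (hN : N.PosSemidef) : 0 ≤ frobInner X (X * N) := by
  set C := CFC.sqrt N with hCdef
  have hCC : C * C = N := CFC.sqrt_mul_sqrt_self N hN.nonneg
  have hCsym : Cᵀ = C := psd_transpose_eq (CFC.sqrt_nonneg N).posSemidef
  have : frobInner (X * C) (X * C) = frobInner X (X * N) := by
    rw [frobInner_mul_right]
    rw [Matrix.mul_assoc, hCsym, hCC]
  rw [← this]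
  exact frobInner_self_nonneg _

lemma frobNorm_le_mul_one_add_psd (X : Matrix m k ℝ) {S : Matrix k k ℝ}
    (hS : S.PosSemidef) : frobNorm X ≤ frobNorm (X * (1 + S)) := by
  have hsym : (1 + S)ᵀ = 1 + S := by
    rw [Matrix.transpose_add, Matrix.transpose_one, psd_transpose_eq hS]
  have hN : ((S + S) + S * S).PosSemidef := by
    refine Matrix.PosSemidef.add (Matrix.PosSemidef.add hS hS) ?_
    have := psd_mul_transpose S
    rwa [psd_transpose_eq hS] at this
  have expand : (1 + S) * (1 + S) = 1 + ((S + S) + S * S) := by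
    rw [Matrix.add_mul, Matrix.mul_add, Matrix.mul_add]
    simp only [Matrix.one_mul, Matrix.mul_one]
    abel
  have key : frobInner (X * (1 + S)) (X * (1 + S)) =
      frobInner X X + frobInner X (X * ((S + S) + S * S)) := by
    rw [frobInner_mul_right, Matrix.mul_assoc, hsym, expand, Matrix.mul_add,
      Matrix.mul_one, frobInner_add_right]
  rw [frobNorm_eq_sqrt_inner, frobNorm_eq_sqrt_inner]
  apply Real.sqrt_le_sqrt
  rw [key]
  have := frobInner_X_mul_psd_nonneg X hN
  linarith

lemma frobNorm_smul (c : ℝ) (A : Matrix m k ℝ) : frobNorm (c • A) = |c| * frobNorm A := by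
  rw [frobNorm, frobNorm]
  have : ∀ i j, ((c • A) i j)^2 = c^2 * (A i j)^2 := by intro i j; simp [Matrix.smul_apply]; ring
  simp_rw [this, ← Finset.mul_sum]
  rw [Real.sqrt_mul (sq_nonneg c), Real.sqrt_sq_eq_abs]

lemma nearest_orth_inv (R : Matrix k k ℝ) (hdet : IsUnit (R * Rᵀ).det) :
    ∃ Q : Matrix k k ℝ, Qᵀ * Q = 1 ∧ frobNorm (R - Q) ≤ frobNorm (R * Rᵀ - 1) := by
  have hPSD : (R * Rᵀ).PosSemidef := psd_mul_transpose R
  set S := CFC.sqrt (R * Rᵀ) with hSdef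
  have hSS : S * S = R * Rᵀ := CFC.sqrt_mul_sqrt_self (R * Rᵀ) hPSD.nonneg
  have hSpsd : S.PosSemidef := (CFC.sqrt_nonneg (R * Rᵀ)).posSemidef
  have hSsym : Sᵀ = S := psd_transpose_eq hSpsd
  have hSdetUnit : IsUnit S.det := by
    have : S.det * S.det = (R * Rᵀ).det := by rw [← Matrix.det_mul, hSS]
    exact isUnit_of_mul_isUnit_left (this ▸ hdet)
  set Q := S⁻¹ * R with hQdef
  have hSinv : S * S⁻¹ = 1 := Matrix.mul_nonsing_inv S hSdetUnit
  have hSinv' : S⁻¹ * S = 1 := Matrix.nonsing_inv_mul S hSdetUnit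
  have hSinvT : S⁻¹ᵀ = S⁻¹ := by rw [Matrix.transpose_nonsing_inv, hSsym]
  have hQQt : Q * Qᵀ = 1 := by
    rw [hQdef, Matrix.transpose_mul, hSinvT]
    calc S⁻¹ * R * (Rᵀ * S⁻¹) = S⁻¹ * (R * Rᵀ) * S⁻¹ := by
          simp only [Matrix.mul_assoc]
    _ = S⁻¹ * (S * S) * S⁻¹ := by rw [hSS]
    _ = (S⁻¹ * S) * (S * S⁻¹) := by rw [Matrix.mul_assoc, Matrix.mul_assoc, Matrix.mul_assoc]
    _ = 1 := by rw [hSinv, hSinv', Matrix.one_mul]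
  have hQ : Qᵀ * Q = 1 := mul_eq_one_comm.mpr hQQt
  refine ⟨Q, hQ, ?_⟩
  have hRQ : R - Q = (S - 1) * Q := by
    rw [Matrix.sub_mul, Matrix.one_mul, hQdef, ← Matrix.mul_assoc, hSinv, Matrix.one_mul]
  rw [hRQ, frobNorm_mul_orth hQ]
  calc frobNorm (S - 1) ≤ frobNorm ((S - 1) * (1 + S)) := frobNorm_le_mul_one_add_psd _ hSpsd
  _ = frobNorm (R * Rᵀ - 1) := by
      congr 1
      rw [Matrix.sub_mul, Matrix.mul_add, Matrix.one_mul, Matrix.mul_one, hSS]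
      abel


lemma eval_charpoly' (R : Matrix k k ℝ) (δ : ℝ) :
    (Matrix.charpoly R).eval δ = (δ • (1 : Matrix k k ℝ) - R).det := by
  rw [Matrix.charpoly]
  have h := (Polynomial.evalRingHom δ).map_det (Matrix.charmatrix R)
  simp only [Polynomial.coe_evalRingHom] at h
  rw [h]
  congr 1
  ext i j
  rw [RingHom.mapMatrix_apply, Matrix.map_apply, Matrix.charmatrix_apply]
  by_cases hij : i = j <;>
    simp [hij, Matrix.diagonal_apply, Matrix.one_apply, Matrix.sub_apply, Matrix.smul_apply]

lemma exists_unit_near (R : Matrix k k ℝ) {ε : ℝ} (hε : 0 < ε) :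
    ∃ δ : ℝ, 0 < δ ∧ δ ≤ ε ∧ IsUnit (R - δ • 1).det := by
  have hfin : {x : ℝ | (Matrix.charpoly R).IsRoot x}.Finite :=
    Polynomial.finite_setOf_isRoot (Matrix.charpoly_monic R).ne_zero
  have hIoc : (Set.Ioc (0:ℝ) ε).Infinite := Set.Ioc_infinite hε
  obtain ⟨δ, hδmem⟩ := (hIoc.diff hfin).nonempty
  refine ⟨δ, hδmem.1.1, hδmem.1.2, ?_⟩
  rw [isUnit_iff_ne_zero]
  have hroot : (Matrix.charpoly R).eval δ ≠ 0 := hδmem.2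
  rw [eval_charpoly'] at hroot
  have hneg : R - δ • 1 = -(δ • (1 : Matrix k k ℝ) - R) := by rw [neg_sub]
  rw [hneg, Matrix.det_neg]
  intro hcontra
  apply hroot
  rcases mul_eq_zero.mp hcontra with h | h
  · exact absurd h (by positivity)
  · exact h

lemma nearest_orth (R : Matrix k k ℝ) :
    ∃ Q : Matrix k k ℝ, Qᵀ * Q = 1 ∧ frobNorm (R - Q) ≤ frobNorm (R * Rᵀ - 1) := by
  set O : Set (Matrix k k ℝ) := {Q | Qᵀ * Q = 1} with hOdef
  have hone : (1 : Matrix k k ℝ) ∈ O := by simp [hOdef]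
  have hOclosed : IsClosed O := by
    have : O = (fun Q : Matrix k k ℝ => Qᵀ * Q) ⁻¹' {1} := by
      ext Q; simp [hOdef]
    rw [this]
    exact IsClosed.preimage ((continuous_id.matrix_transpose).matrix_mul continuous_id)
      isClosed_singleton
  have hOsub : O ⊆ Set.univ.pi (fun _ : k => Set.univ.pi fun _ : k => Set.Icc (-1:ℝ) 1) := by
    intro Q hQ
    refine Set.mem_univ_pi.mpr ?_
    intro i
    rw [Set.mem_univ_pi]
    intro j
    have hcol : ∑ t, (Q t j)^2 = 1 := by
      have h2 := congrFun (congrFun (hQ : Qᵀ * Q = 1) j) j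
      simpa [Matrix.mul_apply, Matrix.transpose_apply, Matrix.one_apply, sq] using h2
    have hle : (Q i j)^2 ≤ 1 := by
      rw [← hcol]
      exact Finset.single_le_sum (f := fun t => (Q t j)^2) (fun t _ => sq_nonneg _)
        (Finset.mem_univ i)
    constructor <;> nlinarith
  have hOcompact : IsCompact O := IsCompact.of_isClosed_subset
      (isCompact_univ_pi fun _ => isCompact_univ_pi fun _ => isCompact_Icc) hOclosed hOsub
  have hcont : Continuous fun Q : Matrix k k ℝ => frobNorm (R - Q) := by
    unfold frobNorm
    apply Real.continuous_sqrt.comp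
    apply continuous_finset_sum _ fun i _ => ?_
    apply continuous_finset_sum _ fun j _ => ?_
    have hentry : Continuous fun Q : Matrix k k ℝ => Q i j :=
      (continuous_apply j).comp (continuous_apply i)
    exact ((continuous_const.sub hentry).pow 2)
  obtain ⟨Q₀, hQ₀O, hmin⟩ := hOcompact.exists_isMinOn ⟨1, hone⟩ hcont.continuousOn
  refine ⟨Q₀, hQ₀O, ?_⟩
  apply le_of_forall_pos_le_add
  intro ε hε
  set c : ℝ := 2 * frobNorm R + 2 * frobNorm (1 : Matrix k k ℝ) + 1 with hcdef
  have hc : 0 < c := by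
    have := frobNorm_nonneg R
    have := frobNorm_nonneg (1 : Matrix k k ℝ)
    positivity
  have hmin' : 0 < min 1 (ε / c) := lt_min one_pos (div_pos hε hc)
  obtain ⟨δ, hδ0, hδle, hδunit⟩ := exists_unit_near R hmin'
  have hδ1 : δ ≤ 1 := le_trans hδle (min_le_left _ _)
  have hδec : δ ≤ ε / c := le_trans hδle (min_le_right _ _)
  have hdet2 : IsUnit ((R - δ • 1) * (R - δ • 1)ᵀ).det := by
    rw [Matrix.det_mul, Matrix.det_transpose]
    exact hδunit.mul hδunit
  obtain ⟨Q, hQorth, hQle⟩ := nearest_orth_inv (R - δ • 1) hdet2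
  have h1 : frobNorm (R - Q₀) ≤ frobNorm (R - Q) := (isMinOn_iff.mp hmin) Q hQorth
  have h2 : frobNorm (R - Q) ≤ δ * frobNorm (1 : Matrix k k ℝ) + frobNorm ((R - δ • 1) - Q) := by
    have : R - Q = δ • (1 : Matrix k k ℝ) + ((R - δ • 1) - Q) := by abel
    rw [this]
    calc frobNorm (δ • (1 : Matrix k k ℝ) + ((R - δ • 1) - Q))
        ≤ frobNorm (δ • (1 : Matrix k k ℝ)) + frobNorm ((R - δ • 1) - Q) := frobNorm_add_le _ _
    _ = δ * frobNorm (1 : Matrix k k ℝ) + frobNorm ((R - δ • 1) - Q) := by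
        rw [frobNorm_smul, abs_of_pos hδ0]
  have expand : (R - δ • 1) * (R - δ • 1)ᵀ - 1 =
      (R * Rᵀ - 1) + ((-δ) • (R + Rᵀ) + (δ^2) • (1 : Matrix k k ℝ)) := by
    rw [Matrix.transpose_sub, Matrix.transpose_smul, Matrix.transpose_one]
    rw [Matrix.sub_mul, Matrix.mul_sub, Matrix.mul_sub]
    simp only [Matrix.smul_mul, Matrix.mul_smul, Matrix.one_mul, Matrix.mul_one]
    module
  have h3 : frobNorm ((R - δ • 1) * (R - δ • 1)ᵀ - 1) ≤
      frobNorm (R * Rᵀ - 1) + (δ * (2 * frobNorm R) + δ^2 * frobNorm (1 : Matrix k k ℝ)) := by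
    rw [expand]
    calc frobNorm ((R * Rᵀ - 1) + ((-δ) • (R + Rᵀ) + (δ^2) • (1 : Matrix k k ℝ)))
        ≤ frobNorm (R * Rᵀ - 1) + frobNorm ((-δ) • (R + Rᵀ) + (δ^2) • (1 : Matrix k k ℝ)) :=
          frobNorm_add_le _ _
    _ ≤ frobNorm (R * Rᵀ - 1) + (frobNorm ((-δ) • (R + Rᵀ)) + frobNorm ((δ^2) • (1 : Matrix k k ℝ))) := by
          have := frobNorm_add_le ((-δ) • (R + Rᵀ)) ((δ^2) • (1 : Matrix k k ℝ))
          linarith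
    _ ≤ frobNorm (R * Rᵀ - 1) + (δ * (2 * frobNorm R) + δ^2 * frobNorm (1 : Matrix k k ℝ)) := by
          rw [frobNorm_smul, frobNorm_smul]
          have habs1 : |(-δ)| = δ := by rw [abs_neg, abs_of_pos hδ0]
          have habs2 : |δ^2| = δ^2 := abs_of_nonneg (sq_nonneg δ)
          rw [habs1, habs2]
          have hRRt : frobNorm (R + Rᵀ) ≤ 2 * frobNorm R := by
            have := frobNorm_add_le R Rᵀ
            rw [frobNorm_transpose] at this
            linarith
          have := mul_le_mul_of_nonneg_left hRRt (le_of_lt hδ0)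
          linarith
  have hfinal : frobNorm (R - Q₀) ≤ frobNorm (R * Rᵀ - 1) + δ * c := by
    have hδsq : δ^2 ≤ δ := by nlinarith
    have h1' := frobNorm_nonneg (1 : Matrix k k ℝ)
    have h2' : δ^2 * frobNorm (1 : Matrix k k ℝ) ≤ δ * frobNorm (1 : Matrix k k ℝ) :=
      mul_le_mul_of_nonneg_right hδsq h1'
    calc frobNorm (R - Q₀) ≤ frobNorm (R - Q) := h1
    _ ≤ δ * frobNorm (1 : Matrix k k ℝ) + frobNorm ((R - δ • 1) - Q) := h2
    _ ≤ δ * frobNorm (1 : Matrix k k ℝ) +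
        (frobNorm (R * Rᵀ - 1) + (δ * (2 * frobNorm R) + δ^2 * frobNorm (1 : Matrix k k ℝ))) := by
        have := le_trans hQle h3
        linarith
    _ ≤ frobNorm (R * Rᵀ - 1) + δ * c := by rw [hcdef]; nlinarith
  calc frobNorm (R - Q₀) ≤ frobNorm (R * Rᵀ - 1) + δ * c := hfinal
  _ ≤ frobNorm (R * Rᵀ - 1) + ε := by
      have : δ * c ≤ ε := by
        rw [div_eq_mul_inv] at hδec
        calc δ * c ≤ (ε / c) * c := mul_le_mul_of_nonneg_right hδec (le_of_lt hc)
        _ = ε := div_mul_cancel₀ ε (ne_of_gt hc)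
      linarith

end Square

lemma frobInner_zero_right (A : Matrix m k ℝ) : frobInner A 0 = 0 := by simp [frobInner]

lemma dot_le_sqrt (x y : k → ℝ) :
    x ⬝ᵥ y ≤ Real.sqrt (vnorm2 x) * Real.sqrt (vnorm2 y) := by
  have h := Finset.sum_mul_sq_le_sq_mul_sq Finset.univ x y
  have h2 : (x ⬝ᵥ y)^2 ≤ vnorm2 x * vnorm2 y := by simpa [dotProduct, vnorm2] using h
  have := Real.sqrt_le_sqrt h2
  rw [Real.sqrt_sq_eq_abs, Real.sqrt_mul (vnorm2_nonneg x)] at this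
  exact le_trans (le_abs_self _) this

lemma vnorm2_mulVec (X : Matrix m k ℝ) (v : k → ℝ) :
    vnorm2 (X *ᵥ v) = v ⬝ᵥ ((Xᵀ * X) *ᵥ v) := by
  rw [vnorm2_eq_dot, Matrix.dotProduct_mulVec, Matrix.vecMul_mulVec]
  have : v ᵥ* (Xᵀ * X) = (Xᵀ * X) *ᵥ v := by
    rw [← Matrix.mulVec_transpose, Matrix.transpose_mul, Matrix.transpose_transpose]
  rw [this]
  exact dotProduct_comm _ _

lemma vnorm2_smul (c : ℝ) (v : k → ℝ) : vnorm2 (c • v) = c^2 * vnorm2 v := by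
  simp [vnorm2, Finset.mul_sum, mul_pow]

lemma vnorm2_eq_zero {v : k → ℝ} (h : vnorm2 v = 0) : v = 0 := by
  funext j
  have h1 : ∀ i ∈ Finset.univ, (0:ℝ) ≤ v i ^ 2 := fun i _ => sq_nonneg _
  have := (Finset.sum_eq_zero_iff_of_nonneg h1).mp h j (Finset.mem_univ j)
  exact pow_eq_zero_iff (by norm_num) |>.mp this

/-- transfer an operator bound across transpose -/
lemma OB.transpose {X : Matrix m k ℝ} {c : ℝ} (h : OB Xᵀ c) : OB X c := by
  refine ⟨h.1, fun v => ?_⟩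
  set a := Real.sqrt (vnorm2 (X *ᵥ v)) with hadef
  have ha2 : a^2 = vnorm2 (X *ᵥ v) := Real.sq_sqrt (vnorm2_nonneg _)
  have ha0 : 0 ≤ a := Real.sqrt_nonneg _
  have hkey : vnorm2 (X *ᵥ v) ≤ Real.sqrt (vnorm2 v) * (c * a) := by
    have e1 : vnorm2 (X *ᵥ v) = v ⬝ᵥ (Xᵀ *ᵥ (X *ᵥ v)) := by
      rw [vnorm2_mulVec, ← Matrix.mulVec_mulVec]
    rw [e1]
    calc v ⬝ᵥ (Xᵀ *ᵥ (X *ᵥ v)) ≤ Real.sqrt (vnorm2 v) * Real.sqrt (vnorm2 (Xᵀ *ᵥ (X *ᵥ v))) :=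
          dot_le_sqrt _ _
    _ ≤ Real.sqrt (vnorm2 v) * (c * a) := by
        apply mul_le_mul_of_nonneg_left _ (Real.sqrt_nonneg _)
        have h2 := h.2 (X *ᵥ v)
        have : vnorm2 (Xᵀ *ᵥ (X *ᵥ v)) ≤ (c * a)^2 := by
          rw [mul_pow, ha2]; exact h2
        calc Real.sqrt (vnorm2 (Xᵀ *ᵥ (X *ᵥ v))) ≤ Real.sqrt ((c*a)^2) := Real.sqrt_le_sqrt this
        _ = c * a := Real.sqrt_sq (mul_nonneg h.1 ha0)
  -- now a^2 ≤ √(vnorm2 v) * c * a  ⇒ a ≤ √(vnorm2 v) * c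
  have hb0 : 0 ≤ Real.sqrt (vnorm2 v) := Real.sqrt_nonneg _
  have hb2 : (Real.sqrt (vnorm2 v))^2 = vnorm2 v := Real.sq_sqrt (vnorm2_nonneg _)
  rcases eq_or_lt_of_le ha0 with h0 | h0
  · rw [← ha2, ← h0]
    have h00 : ((0:ℝ))^2 = 0 := by norm_num
    rw [h00]
    exact mul_nonneg (sq_nonneg c) (vnorm2_nonneg v)
  · have ha : a ≤ Real.sqrt (vnorm2 v) * c := by
      rw [← ha2] at hkey
      have := (mul_le_mul_iff_left₀ h0).mp (by linarith [hkey] : a * a ≤ (Real.sqrt (vnorm2 v) * c) * a)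
      exact this
    rw [← ha2]
    calc a^2 ≤ (Real.sqrt (vnorm2 v) * c)^2 := by nlinarith
    _ = c^2 * vnorm2 v := by rw [mul_pow, hb2]; ring

lemma quad_le_frob (W : Matrix k k ℝ) (v : k → ℝ) :
    v ⬝ᵥ (W *ᵥ v) ≤ frobNorm W * vnorm2 v := by
  calc v ⬝ᵥ (W *ᵥ v) ≤ Real.sqrt (vnorm2 v) * Real.sqrt (vnorm2 (W *ᵥ v)) := dot_le_sqrt _ _
  _ ≤ Real.sqrt (vnorm2 v) * Real.sqrt ((frobNorm W)^2 * vnorm2 v) := by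
      apply mul_le_mul_of_nonneg_left (Real.sqrt_le_sqrt ((OB_of_frobNorm W).2 v))
        (Real.sqrt_nonneg _)
  _ = frobNorm W * vnorm2 v := by
      rw [Real.sqrt_mul (sq_nonneg _), Real.sqrt_sq (frobNorm_nonneg W)]
      have h := Real.mul_self_sqrt (vnorm2_nonneg v)
      linear_combination frobNorm W * h

section Pinv

variable [DecidableEq k] {B : Matrix m k ℝ} {lam : ℝ}

/-- abbreviation for `R = (BᵀB)⁻¹ Bᵀ A` -/
def pinvR (B : Matrix m k ℝ) (A : Matrix m k ℝ) : Matrix k k ℝ :=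
  (Bᵀ * B)⁻¹ * (Bᵀ * A)

lemma gram_symm (B : Matrix m k ℝ) : (Bᵀ * B)ᵀ = Bᵀ * B := by
  rw [Matrix.transpose_mul, Matrix.transpose_transpose]

lemma gram_quadratic (B : Matrix m k ℝ) (v : k → ℝ) :
    v ⬝ᵥ ((Bᵀ * B) *ᵥ v) = vnorm2 (B *ᵥ v) := (vnorm2_mulVec B v).symm

lemma gram_isUnit (hlam : 0 < lam)
    (hlb : ∀ x : k → ℝ, lam * vnorm2 x ≤ vnorm2 (B *ᵥ x)) : IsUnit (Bᵀ * B).det := by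
  have hpd : (Bᵀ * B).PosDef := by
    refine Matrix.PosDef.of_dotProduct_mulVec_pos (isHermitian_of_symm (gram_symm B)) (fun x hx => ?_)
    have hx2 : 0 < vnorm2 x := by
      rcases eq_or_lt_of_le (vnorm2_nonneg x) with h | h
      · exact absurd (vnorm2_eq_zero h.symm) hx
      · exact h
    have h1 := hlb x
    have h3 : 0 < vnorm2 (B *ᵥ x) := lt_of_lt_of_le (mul_pos hlam hx2) h1
    have h4 : star x ⬝ᵥ ((Bᵀ * B) *ᵥ x) = vnorm2 (B *ᵥ x) := by
      have hst : star x = x := by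
        funext i; simp
      rw [hst, gram_quadratic]
    rw [h4]
    exact h3
  have := hpd.det_pos
  exact isUnit_iff_ne_zero.mpr (ne_of_gt this)

lemma gram_inv_symm (hG : IsUnit (Bᵀ * B).det) : ((Bᵀ * B)⁻¹)ᵀ = (Bᵀ * B)⁻¹ := by
  rw [Matrix.transpose_nonsing_inv, gram_symm]

lemma OB_pinv (hlam : 0 < lam)
    (hlb : ∀ x : k → ℝ, lam * vnorm2 x ≤ vnorm2 (B *ᵥ x)) :
    OB ((Bᵀ * B)⁻¹ * Bᵀ) (1 / Real.sqrt lam) := by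
  have hG := gram_isUnit hlam hlb
  have hG2 : (Bᵀ * B) * (Bᵀ * B)⁻¹ = 1 := Matrix.mul_nonsing_inv _ hG
  refine ⟨by positivity, fun v => ?_⟩
  set w := ((Bᵀ * B)⁻¹ * Bᵀ) *ᵥ v with hwdef
  have hGw : (Bᵀ * B) *ᵥ w = Bᵀ *ᵥ v := by
    rw [hwdef, Matrix.mulVec_mulVec, ← Matrix.mul_assoc, hG2, Matrix.one_mul]
  have key1 : vnorm2 (B *ᵥ w) = (B *ᵥ w) ⬝ᵥ v := by
    rw [← gram_quadratic, hGw, Matrix.dotProduct_mulVec, Matrix.vecMul_transpose]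
  have hBw : Real.sqrt (vnorm2 (B *ᵥ w)) ≤ Real.sqrt (vnorm2 v) := by
    set a := Real.sqrt (vnorm2 (B *ᵥ w)) with hadef
    have ha2 : a^2 = vnorm2 (B *ᵥ w) := Real.sq_sqrt (vnorm2_nonneg _)
    have ha0 : 0 ≤ a := Real.sqrt_nonneg _
    have hb0 : 0 ≤ Real.sqrt (vnorm2 v) := Real.sqrt_nonneg _
    have hb2 : (Real.sqrt (vnorm2 v))^2 = vnorm2 v := Real.sq_sqrt (vnorm2_nonneg _)
    have : a^2 ≤ a * Real.sqrt (vnorm2 v) := by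
      rw [ha2, key1]
      calc (B *ᵥ w) ⬝ᵥ v ≤ Real.sqrt (vnorm2 (B *ᵥ w)) * Real.sqrt (vnorm2 v) := dot_le_sqrt _ _
      _ = a * Real.sqrt (vnorm2 v) := by rw [hadef]
    nlinarith
  have hlow := hlb w
  have : lam * vnorm2 w ≤ vnorm2 v := by
    calc lam * vnorm2 w ≤ vnorm2 (B *ᵥ w) := hlow
    _ ≤ vnorm2 v := by
        have := Real.sqrt_le_sqrt (le_refl (vnorm2 (B *ᵥ w)))
        nlinarith [Real.sq_sqrt (vnorm2_nonneg (B *ᵥ w)), Real.sq_sqrt (vnorm2_nonneg v),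
          Real.sqrt_nonneg (vnorm2 (B *ᵥ w)), Real.sqrt_nonneg (vnorm2 v), hBw]
  have hs : (1 / Real.sqrt lam)^2 = 1 / lam := by
    rw [div_pow, one_pow, Real.sq_sqrt (le_of_lt hlam)]
  rw [hs]
  rw [one_div, inv_mul_eq_div]
  rw [le_div_iff₀' hlam]
  exact this

lemma cross_RRt (hlam : 0 < lam) {B' : Matrix m k ℝ}
    (hlb : ∀ x : k → ℝ, lam * vnorm2 x ≤ vnorm2 (B *ᵥ x))
    (hlb' : ∀ x : k → ℝ, lam * vnorm2 x ≤ vnorm2 (B' *ᵥ x))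
    (A A' : Matrix m k ℝ) {ε : ℝ}
    (hcross : frobNorm (A * A'ᵀ - B * B'ᵀ) ≤ ε) :
    frobNorm (pinvR B A * (pinvR B' A')ᵀ - 1) ≤ ε / lam := by
  have hG := gram_isUnit hlam hlb
  have hG' := gram_isUnit hlam hlb'
  set G := Bᵀ * B with hGdef
  set G' := B'ᵀ * B' with hG'def
  have hG1 : G⁻¹ * G = 1 := Matrix.nonsing_inv_mul _ hG
  have hG2 : G' * G'⁻¹ = 1 := Matrix.mul_nonsing_inv _ hG'
  have hid : pinvR B A * (pinvR B' A')ᵀ - 1 =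
      (G⁻¹ * Bᵀ) * ((A * A'ᵀ - B * B'ᵀ) * (B' * G'⁻¹)) := by
    rw [Matrix.sub_mul, Matrix.mul_sub]
    congr 1
    · -- R * R'ᵀ = (G⁻¹ Bᵀ)(A A'ᵀ)(B' G'⁻¹)
      rw [pinvR, pinvR, Matrix.transpose_mul, gram_inv_symm hG', Matrix.transpose_mul,
        Matrix.transpose_transpose]
      simp only [Matrix.mul_assoc]
      rfl
    · -- 1 = (G⁻¹ Bᵀ)(B B'ᵀ)(B' G'⁻¹)
      have : (G⁻¹ * Bᵀ) * ((B * B'ᵀ) * (B' * G'⁻¹)) = (G⁻¹ * (Bᵀ * B)) * ((B'ᵀ * B') * G'⁻¹) := by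
        simp only [Matrix.mul_assoc]
      rw [this, ← hGdef, ← hG'def, hG1, hG2, Matrix.one_mul]
  rw [hid]
  have hOB := OB_pinv hlam hlb
  have hOB' := OB_pinv hlam hlb'
  rw [← hGdef] at hOB
  rw [← hG'def] at hOB'
  have step1 : frobNorm ((A * A'ᵀ - B * B'ᵀ) * (B' * G'⁻¹)) ≤ (1 / Real.sqrt lam) * ε := by
    have hrw : B' * G'⁻¹ = (G'⁻¹ * B'ᵀ)ᵀ := by
      rw [Matrix.transpose_mul, Matrix.transpose_transpose, gram_inv_symm hG']
    rw [hrw]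
    calc frobNorm ((A * A'ᵀ - B * B'ᵀ) * (G'⁻¹ * B'ᵀ)ᵀ)
        ≤ (1 / Real.sqrt lam) * frobNorm (A * A'ᵀ - B * B'ᵀ) := hOB'.frob_mul_right _
    _ ≤ (1 / Real.sqrt lam) * ε := by
        apply mul_le_mul_of_nonneg_left hcross hOB'.1
  calc frobNorm ((G⁻¹ * Bᵀ) * ((A * A'ᵀ - B * B'ᵀ) * (B' * G'⁻¹)))
      ≤ (1 / Real.sqrt lam) * frobNorm ((A * A'ᵀ - B * B'ᵀ) * (B' * G'⁻¹)) :=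
        hOB.frob_mul_left _
  _ ≤ (1 / Real.sqrt lam) * ((1 / Real.sqrt lam) * ε) := by
      apply mul_le_mul_of_nonneg_left step1 hOB.1
  _ = ε / lam := by
      rw [← mul_assoc, div_mul_div_comm, one_mul, Real.mul_self_sqrt (le_of_lt hlam)]
      ring

lemma OB_pinvR (hlam : 0 < lam)
    (hlb : ∀ x : k → ℝ, lam * vnorm2 x ≤ vnorm2 (B *ᵥ x))
    (A : Matrix m k ℝ) {ε : ℝ} (hε : 0 ≤ ε)
    (hAB : frobNorm (A * Aᵀ - B * Bᵀ) ≤ ε) :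
    OB (pinvR B A) (Real.sqrt (1 + ε / lam)) := by
  have hW := cross_RRt hlam hlb hlb A A hAB
  apply OB.transpose
  refine ⟨Real.sqrt_nonneg _, fun v => ?_⟩
  set R := pinvR B A with hRdef
  have e1 : vnorm2 (Rᵀ *ᵥ v) = v ⬝ᵥ ((R * Rᵀ) *ᵥ v) := by
    rw [vnorm2_mulVec, Matrix.transpose_transpose]
  have e2 : (R * Rᵀ) = 1 + (R * Rᵀ - 1) := by abel
  have e3 : v ⬝ᵥ ((R * Rᵀ) *ᵥ v) = vnorm2 v + v ⬝ᵥ ((R * Rᵀ - 1) *ᵥ v) := by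
    rw [e2]
    rw [Matrix.add_mulVec, dotProduct_add, Matrix.one_mulVec, vnorm2_eq_dot]
    simp
  have e4 : v ⬝ᵥ ((R * Rᵀ - 1) *ᵥ v) ≤ (ε / lam) * vnorm2 v := by
    calc v ⬝ᵥ ((R * Rᵀ - 1) *ᵥ v) ≤ frobNorm (R * Rᵀ - 1) * vnorm2 v := quad_le_frob _ _
    _ ≤ (ε / lam) * vnorm2 v := mul_le_mul_of_nonneg_right hW (vnorm2_nonneg v)
  have hsq : (Real.sqrt (1 + ε / lam))^2 = 1 + ε / lam := by
    apply Real.sq_sqrt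
    positivity
  rw [e1, e3, hsq]
  have := vnorm2_nonneg v
  nlinarith [e4]

lemma trace_gram_sq (X : Matrix m k ℝ) :
    ((Xᵀ*X)*(Xᵀ*X)).trace = ((X*Xᵀ)*(X*Xᵀ)).trace := by
  calc ((Xᵀ*X)*(Xᵀ*X)).trace = (Xᵀ*(X*(Xᵀ*X))).trace := by simp only [Matrix.mul_assoc]
  _ = ((X*(Xᵀ*X))*Xᵀ).trace := Matrix.trace_mul_comm _ _
  _ = ((X*Xᵀ)*(X*Xᵀ)).trace := by simp only [Matrix.mul_assoc]

lemma frob_gram_comm (X : Matrix m k ℝ) : frobNorm (Xᵀ * X) = frobNorm (X * Xᵀ) := by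
  rw [frobNorm_eq_sqrt_inner, frobNorm_eq_sqrt_inner]
  congr 1
  rw [frobInner_eq_trace, frobInner_eq_trace]
  simp only [Matrix.transpose_mul, Matrix.transpose_transpose]
  exact trace_gram_sq X

lemma frob_one_sub_gram [DecidableEq k] (R : Matrix k k ℝ) :
    frobNorm (1 - Rᵀ*R) = frobNorm (1 - R*Rᵀ) := by
  rw [frobNorm_eq_sqrt_inner, frobNorm_eq_sqrt_inner]
  congr 1
  have expand : ∀ N : Matrix k k ℝ, frobInner (1-N) (1-N) =
      frobInner (1 : Matrix k k ℝ) 1 - frobInner 1 N - frobInner N 1 + frobInner N N := by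
    intro N
    rw [frobInner_sub_left, frobInner_sub_right, frobInner_sub_right]
    ring
  rw [expand, expand]
  have h1 : frobInner (1 : Matrix k k ℝ) (Rᵀ*R) = frobInner (1 : Matrix k k ℝ) (R*Rᵀ) := by
    rw [frobInner_eq_trace, frobInner_eq_trace, Matrix.transpose_one, Matrix.one_mul,
      Matrix.one_mul, Matrix.trace_mul_comm]
  have h2 : frobInner (Rᵀ*R) (1 : Matrix k k ℝ) = frobInner (R*Rᵀ) 1 := by
    rw [frobInner_comm, h1, frobInner_comm]
  have h3 : frobInner (Rᵀ*R) (Rᵀ*R) = frobInner (R*Rᵀ) (R*Rᵀ) := by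
    rw [frobInner_eq_trace, frobInner_eq_trace]
    simp only [Matrix.transpose_mul, Matrix.transpose_transpose]
    exact trace_gram_sq R
  rw [h1, h2, h3]

lemma frob_mul_lower {B : Matrix m k ℝ} {lam : ℝ}
    (hlb : ∀ x : k → ℝ, lam * vnorm2 x ≤ vnorm2 (B *ᵥ x)) (X : Matrix q k ℝ) :
    lam * frobNorm X ^ 2 ≤ frobNorm (X * Bᵀ) ^ 2 := by
  rw [sq_frobNorm, sq_frobNorm, frobInner_self, frobInner_self, Finset.mul_sum]
  apply Finset.sum_le_sum
  intro i _
  have e : ∑ j, ((X * Bᵀ) i j)^2 = vnorm2 (B *ᵥ (fun t => X i t)) := by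
    unfold vnorm2
    apply Finset.sum_congr rfl
    intro j _
    congr 1
    simp [Matrix.mul_apply, Matrix.mulVec, dotProduct, Matrix.transpose_apply, mul_comm]
  have e2 : lam * ∑ j, (X i j)^2 = lam * vnorm2 (fun t => X i t) := rfl
  rw [e, e2]
  exact hlb _

lemma OB_one_sub_P [DecidableEq k] {B : Matrix m k ℝ} {lam : ℝ} (hlam : 0 < lam)
    (hlb : ∀ x : k → ℝ, lam * vnorm2 x ≤ vnorm2 (B *ᵥ x)) :
    OB ((1 : Matrix m m ℝ) - B * ((Bᵀ*B)⁻¹ * Bᵀ)) 1 := by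
  classical
  have hG := gram_isUnit hlam hlb
  have hG1 : (Bᵀ*B)⁻¹ * (Bᵀ*B) = 1 := Matrix.nonsing_inv_mul _ hG
  set P := B * ((Bᵀ*B)⁻¹ * Bᵀ) with hP
  have hPsym : Pᵀ = P := by
    rw [hP, Matrix.transpose_mul, Matrix.transpose_mul, Matrix.transpose_transpose,
      gram_inv_symm hG, Matrix.mul_assoc]
  have hPidem : P * P = P := by
    rw [hP]
    calc B * ((Bᵀ*B)⁻¹ * Bᵀ) * (B * ((Bᵀ*B)⁻¹ * Bᵀ))
        = B * ((Bᵀ*B)⁻¹ * ((Bᵀ*B) * ((Bᵀ*B)⁻¹ * Bᵀ))) := by simp only [Matrix.mul_assoc]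
    _ = B * ((Bᵀ*B)⁻¹ * Bᵀ) := by
        rw [← Matrix.mul_assoc (Bᵀ*B), Matrix.mul_nonsing_inv _ hG, Matrix.one_mul]
  refine ⟨zero_le_one, fun v => ?_⟩
  have hsub : ((1:Matrix m m ℝ) - P)ᵀ * (1 - P) = 1 - P := by
    rw [Matrix.transpose_sub, Matrix.transpose_one, hPsym, Matrix.sub_mul, Matrix.mul_sub,
      Matrix.mul_sub]
    simp only [Matrix.one_mul, Matrix.mul_one, hPidem]
    abel
  have e1 : vnorm2 (((1:Matrix m m ℝ) - P) *ᵥ v) = v ⬝ᵥ (((1:Matrix m m ℝ) - P) *ᵥ v) := by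
    rw [vnorm2_mulVec, hsub]
  have e2 : 0 ≤ v ⬝ᵥ (P *ᵥ v) := by
    set u := ((Bᵀ*B)⁻¹ * Bᵀ) *ᵥ v with hu
    have h1 : P *ᵥ v = B *ᵥ u := by rw [hP, hu, Matrix.mulVec_mulVec]
    have h2 : Bᵀ *ᵥ v = (Bᵀ*B) *ᵥ u := by
      rw [hu, Matrix.mulVec_mulVec, ← Matrix.mul_assoc, Matrix.mul_nonsing_inv _ hG,
        Matrix.one_mul]
    have h3 : v ⬝ᵥ (P *ᵥ v) = (Bᵀ *ᵥ v) ⬝ᵥ u := by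
      rw [h1, Matrix.dotProduct_mulVec]
      congr 1
      rw [← Matrix.mulVec_transpose]
    rw [h3, h2, dotProduct_comm, gram_quadratic]
    exact vnorm2_nonneg _
  rw [e1, Matrix.sub_mulVec, Matrix.one_mulVec, dotProduct_sub, one_pow, one_mul,
    vnorm2_eq_dot]
  linarith

lemma block_procrustes [DecidableEq k] {B : Matrix m k ℝ} {lam : ℝ} (hlam : 0 < lam)
    (hlb : ∀ x : k → ℝ, lam * vnorm2 x ≤ vnorm2 (B *ᵥ x))
    {S : ℝ} (hSB : OB B S) (A : Matrix m k ℝ) {ε : ℝ}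
    (hAB : frobNorm (A * Aᵀ - B * Bᵀ) ≤ ε) :
    ∃ Q : Matrix k k ℝ, Qᵀ * Q = 1 ∧
      frobNorm (pinvR B A - Q) ≤ ε / lam ∧
      frobNorm (A - B * Q) ≤ Real.sqrt 2 * ε / Real.sqrt lam + S * (ε / lam) := by
  have hε : 0 ≤ ε := le_trans (frobNorm_nonneg _) hAB
  have hG := gram_isUnit hlam hlb
  have hG1 : (Bᵀ*B)⁻¹ * (Bᵀ*B) = 1 := Matrix.nonsing_inv_mul _ hG
  have hW : frobNorm (pinvR B A * (pinvR B A)ᵀ - 1) ≤ ε / lam := cross_RRt hlam hlb hlb A A hAB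
  set R := pinvR B A with hR
  set E := A - B * R with hE
  have hA : A = B * R + E := by rw [hE]; abel
  have hBE : Bᵀ * E = 0 := by
    rw [hE, Matrix.mul_sub, hR, pinvR]
    have h5 : Bᵀ * (B * ((Bᵀ*B)⁻¹ * (Bᵀ*A))) = ((Bᵀ*B) * (Bᵀ*B)⁻¹) * (Bᵀ*A) := by
      simp only [Matrix.mul_assoc]
    rw [h5, Matrix.mul_nonsing_inv _ hG, Matrix.one_mul, sub_self]
  set P := B * ((Bᵀ*B)⁻¹ * Bᵀ) with hP
  have hEP : E = ((1 : Matrix m m ℝ) - P) * A := by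
    rw [hE, Matrix.sub_mul, Matrix.one_mul, hP, hR, pinvR]
    congr 1
    simp only [Matrix.mul_assoc]
  have hPB : ((1 : Matrix m m ℝ) - P) * B = 0 := by
    rw [Matrix.sub_mul, Matrix.one_mul, hP]
    have h6 : B * ((Bᵀ*B)⁻¹ * Bᵀ) * B = B * ((Bᵀ*B)⁻¹ * (Bᵀ*B)) := by
      simp only [Matrix.mul_assoc]
    rw [h6, hG1, Matrix.mul_one, sub_self]
  set D := A * Aᵀ - B * Bᵀ with hD
  have hEA : E * Aᵀ = ((1 : Matrix m m ℝ) - P) * D := by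
    rw [hEP, hD, Matrix.mul_sub]
    have h0 : ((1 : Matrix m m ℝ) - P) * (B * Bᵀ) = 0 := by
      rw [← Matrix.mul_assoc, hPB, Matrix.zero_mul]
    rw [h0, sub_zero, Matrix.mul_assoc]
  have hEAle : frobNorm (E * Aᵀ) ≤ ε := by
    rw [hEA]
    calc frobNorm (((1 : Matrix m m ℝ) - P)*D) ≤ 1 * frobNorm D :=
          (OB_one_sub_P hlam hlb).frob_mul_left D
    _ ≤ ε := by rw [one_mul]; exact hAB
  have hsplit : E * Aᵀ = (E * Rᵀ) * Bᵀ + E * Eᵀ := by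
    conv_lhs => rw [hA]
    rw [Matrix.transpose_add, Matrix.transpose_mul, Matrix.mul_add, ← Matrix.mul_assoc]
  have hEtB : Eᵀ * B = 0 := by
    have h7 := congrArg Matrix.transpose hBE
    simpa [Matrix.transpose_mul] using h7
  have hcross0 : frobInner ((E*Rᵀ)*Bᵀ) (E*Eᵀ) = 0 := by
    rw [frobInner_mul_right, Matrix.transpose_transpose]
    have h8 : (E * Eᵀ) * B = 0 := by
      rw [Matrix.mul_assoc, hEtB, Matrix.mul_zero]
    rw [h8, frobInner_zero_right]
  have hpyth : frobNorm ((E*Rᵀ)*Bᵀ)^2 + frobNorm (E*Eᵀ)^2 = frobNorm (E*Aᵀ)^2 := by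
    rw [sq_frobNorm, sq_frobNorm, sq_frobNorm, hsplit, frobInner_add_left,
      frobInner_add_right, frobInner_add_right, hcross0,
      frobInner_comm (E*Eᵀ) ((E*Rᵀ)*Bᵀ), hcross0]
    ring
  have hEA2 : frobNorm (E*Aᵀ)^2 ≤ ε^2 := pow_le_pow_left₀ (frobNorm_nonneg _) hEAle 2
  have hX1 : frobNorm ((E*Rᵀ)*Bᵀ)^2 ≤ ε^2 := by nlinarith [sq_nonneg (frobNorm (E*Eᵀ))]
  have hX2 : frobNorm (E*Eᵀ) ≤ ε := by
    nlinarith [frobNorm_nonneg (E*Eᵀ), sq_nonneg (frobNorm ((E*Rᵀ)*Bᵀ))]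
  have hER2 : frobNorm (E * Rᵀ)^2 ≤ ε^2 / lam := by
    have := frob_mul_lower hlb (E*Rᵀ)
    rw [le_div_iff₀' hlam]
    linarith
  have hEsq : frobInner E E ≤ 2 * ε^2 / lam := by
    have e0 : (Rᵀ*R) + ((1 : Matrix k k ℝ) - Rᵀ*R) = 1 := by abel
    have e1 : frobInner E E = frobInner E (E * (Rᵀ*R)) +
        frobInner E (E * ((1 : Matrix k k ℝ) - Rᵀ*R)) := by
      rw [← frobInner_add_right, ← Matrix.mul_add, e0, Matrix.mul_one]
    have e2 : frobInner E (E * (Rᵀ*R)) = frobInner (E*Rᵀ) (E*Rᵀ) := by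
      rw [frobInner_mul_right E Rᵀ (E*Rᵀ), Matrix.transpose_transpose, Matrix.mul_assoc]
    have e3 : frobInner E (E * ((1 : Matrix k k ℝ) - Rᵀ*R)) ≤
        frobNorm (Eᵀ*E) * frobNorm ((1 : Matrix k k ℝ) - Rᵀ*R) := by
      have h9 : frobInner E (E * ((1 : Matrix k k ℝ) - Rᵀ*R)) =
          frobInner (Eᵀ*E) ((1 : Matrix k k ℝ) - Rᵀ*R) := by
        rw [frobInner_comm, frobInner_mul_left, frobInner_comm]
      rw [h9]
      exact le_trans (le_abs_self _) (abs_frobInner_le _ _)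
    have e4 : frobNorm (Eᵀ*E) = frobNorm (E*Eᵀ) := frob_gram_comm E
    have e5 : frobNorm ((1 : Matrix k k ℝ) - Rᵀ*R) = frobNorm (R*Rᵀ - 1) := by
      rw [frob_one_sub_gram, ← frobNorm_neg, neg_sub]
    have e6 : frobInner E (E * (Rᵀ*R)) ≤ ε^2 / lam := by
      rw [e2, ← sq_frobNorm]
      exact hER2
    have e7 : frobNorm (E*Eᵀ) * frobNorm (R*Rᵀ - 1) ≤ ε * (ε / lam) :=
      mul_le_mul hX2 hW (frobNorm_nonneg _) hε
    rw [e1]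
    have e8 := e3
    rw [e4, e5] at e8
    have : ε * (ε/lam) = ε^2/lam := by ring
    rw [this] at e7
    have : 2 * ε^2/lam = ε^2/lam + ε^2/lam := by ring
    rw [this]
    linarith [le_trans e8 e7]
  obtain ⟨Q, hQ, hRQ⟩ := nearest_orth R
  have hRQle : frobNorm (R - Q) ≤ ε / lam := le_trans hRQ hW
  refine ⟨Q, hQ, hRQle, ?_⟩
  have hfin : A - B * Q = E + B * (R - Q) := by rw [hE, Matrix.mul_sub]; abel
  rw [hfin]
  have h1 : frobNorm E ≤ Real.sqrt 2 * ε / Real.sqrt lam := by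
    apply frobNorm_le_of_sq_le
    · positivity
    · have hc2 : (Real.sqrt 2 * ε / Real.sqrt lam)^2 = 2 * ε^2 / lam := by
        rw [div_pow, mul_pow, Real.sq_sqrt (by norm_num : (0:ℝ) ≤ 2), Real.sq_sqrt hlam.le]
      rw [hc2]
      exact hEsq
  have h2 : frobNorm (B*(R-Q)) ≤ S * (ε/lam) := by
    calc frobNorm (B*(R-Q)) ≤ S * frobNorm (R-Q) := hSB.frob_mul_left _
    _ ≤ S * (ε/lam) := mul_le_mul_of_nonneg_left hRQle hSB.1
  calc frobNorm (E + B*(R-Q)) ≤ frobNorm E + frobNorm (B*(R-Q)) := frobNorm_add_le _ _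
  _ ≤ Real.sqrt 2 * ε / Real.sqrt lam + S * (ε/lam) := by linarith

lemma sqrt_one_add_le {x : ℝ} (hx : 0 ≤ x) : Real.sqrt (1 + x) ≤ 1 + x := by
  have h1 : (1:ℝ) + x ≤ (1+x)^2 := by nlinarith
  calc Real.sqrt (1+x) ≤ Real.sqrt ((1+x)^2) := Real.sqrt_le_sqrt h1
  _ = 1 + x := Real.sqrt_sq (by linarith)

lemma align_bound [DecidableEq k] {B B' A A' : Matrix m k ℝ} {lam ε : ℝ} (hlam : 0 < lam)
    (hlb : ∀ x : k → ℝ, lam * vnorm2 x ≤ vnorm2 (B *ᵥ x))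
    (hlb' : ∀ x : k → ℝ, lam * vnorm2 x ≤ vnorm2 (B' *ᵥ x))
    (hε : 0 ≤ ε)
    (hAA : frobNorm (A * Aᵀ - B * Bᵀ) ≤ ε)
    (hcross : frobNorm (A * A'ᵀ - B * B'ᵀ) ≤ ε)
    {Q Q' : Matrix k k ℝ} (hQ : Qᵀ*Q = 1) (hQ' : Q'ᵀ*Q' = 1)
    (hRQ : frobNorm (pinvR B A - Q) ≤ ε/lam)
    (hRQ' : frobNorm (pinvR B' A' - Q') ≤ ε/lam) :
    frobNorm (Q - Q') ≤ 3*(ε/lam) + (ε/lam)^2 := by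
  have hQ'Qt : Q' * Q'ᵀ = 1 := mul_eq_one_comm.mpr hQ'
  have hQtorth : (Q'ᵀ)ᵀ * Q'ᵀ = 1 := by rw [Matrix.transpose_transpose]; exact hQ'Qt
  set R := pinvR B A with hR
  set R' := pinvR B' A' with hR'
  have hRR' : frobNorm (R * R'ᵀ - 1) ≤ ε/lam := cross_RRt hlam hlb hlb' A A' hcross
  have hOBR : OB R (Real.sqrt (1 + ε/lam)) := OB_pinvR hlam hlb A hε hAA
  have hdecomp : Q * Q'ᵀ - 1 = (Q - R) * Q'ᵀ + R * (Q' - R')ᵀ + (R * R'ᵀ - 1) := by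
    rw [Matrix.sub_mul, Matrix.transpose_sub, Matrix.mul_sub]
    abel
  have hel : 0 ≤ ε / lam := div_nonneg hε hlam.le
  have ht1 : frobNorm ((Q - R) * Q'ᵀ) ≤ ε/lam := by
    rw [frobNorm_mul_orth hQtorth, ← frobNorm_neg, neg_sub]
    exact hRQ
  have ht2 : frobNorm (R * (Q' - R')ᵀ) ≤ (1 + ε/lam) * (ε/lam) := by
    rw [← frobNorm_transpose, Matrix.transpose_mul, Matrix.transpose_transpose]
    calc frobNorm ((Q' - R') * Rᵀ) ≤ Real.sqrt (1 + ε/lam) * frobNorm (Q' - R') :=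
          hOBR.frob_mul_right _
    _ ≤ (1 + ε/lam) * (ε/lam) := by
        apply mul_le_mul (sqrt_one_add_le hel) _ (frobNorm_nonneg _) (by linarith)
        rw [← frobNorm_neg, neg_sub]
        exact hRQ'
  have hQQ' : frobNorm (Q * Q'ᵀ - 1) ≤ 3*(ε/lam) + (ε/lam)^2 := by
    rw [hdecomp]
    calc frobNorm ((Q - R) * Q'ᵀ + R * (Q' - R')ᵀ + (R * R'ᵀ - 1))
        ≤ frobNorm ((Q - R) * Q'ᵀ + R * (Q' - R')ᵀ) + frobNorm (R * R'ᵀ - 1) :=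
          frobNorm_add_le _ _
    _ ≤ frobNorm ((Q - R) * Q'ᵀ) + frobNorm (R * (Q' - R')ᵀ) + frobNorm (R * R'ᵀ - 1) := by
          have := frobNorm_add_le ((Q - R) * Q'ᵀ) (R * (Q' - R')ᵀ)
          linarith
    _ ≤ 3*(ε/lam) + (ε/lam)^2 := by
          have := ht1; have := ht2; have := hRR'
          nlinarith [hel]
  have hfin : (Q * Q'ᵀ - 1) * Q' = Q - Q' := by
    rw [Matrix.sub_mul, Matrix.one_mul, Matrix.mul_assoc, hQ', Matrix.mul_one]
  calc frobNorm (Q - Q') = frobNorm ((Q * Q'ᵀ - 1) * Q') := by rw [hfin]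
  _ = frobNorm (Q * Q'ᵀ - 1) := frobNorm_mul_orth hQ' _
  _ ≤ 3*(ε/lam) + (ε/lam)^2 := hQQ'

end Pinv

section Spec
variable [Nonempty k]

lemma specNorm_bddAbove (A : Matrix m k ℝ) :
    BddAbove {c : ℝ | ∃ x : k → ℝ, ∑ j, x j ^ 2 = 1 ∧ c = Real.sqrt (∑ i, (A.mulVec x i) ^ 2)} := by
  refine ⟨frobNorm A, ?_⟩
  rintro c ⟨x, hx, rfl⟩
  have h1 : vnorm2 (A *ᵥ x) ≤ (frobNorm A)^2 * vnorm2 x := (OB_of_frobNorm A).2 x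
  have hx1 : vnorm2 x = 1 := hx
  rw [hx1, mul_one] at h1
  calc Real.sqrt (∑ i, (A.mulVec x i)^2) = Real.sqrt (vnorm2 (A *ᵥ x)) := rfl
  _ ≤ Real.sqrt ((frobNorm A)^2) := Real.sqrt_le_sqrt h1
  _ = frobNorm A := Real.sqrt_sq (frobNorm_nonneg A)

lemma specNorm_ge (A : Matrix m k ℝ) {x : k → ℝ} (hx : ∑ j, x j ^ 2 = 1) :
    Real.sqrt (∑ i, (A.mulVec x i) ^ 2) ≤ specNorm A :=
  le_csSup (specNorm_bddAbove A) ⟨x, hx, rfl⟩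

lemma specNorm_nonneg (A : Matrix m k ℝ) : 0 ≤ specNorm A := by
  classical
  set j0 : k := Classical.arbitrary k
  set x0 : k → ℝ := fun j => if j = j0 then 1 else 0 with hx0
  have hx : ∑ j, x0 j ^ 2 = 1 := by
    rw [hx0]
    simp [apply_ite (fun t : ℝ => t^2)]
  exact le_trans (Real.sqrt_nonneg _) (specNorm_ge A hx)

lemma OB_specNorm (A : Matrix m k ℝ) : OB A (specNorm A) := by
  refine ⟨specNorm_nonneg A, fun v => ?_⟩
  rcases eq_or_lt_of_le (vnorm2_nonneg v) with h0 | h0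
  · have hv : v = 0 := vnorm2_eq_zero h0.symm
    rw [hv, Matrix.mulVec_zero]
    have hz1 : vnorm2 (0 : m → ℝ) = 0 := by simp [vnorm2]
    have hz2 : vnorm2 (0 : k → ℝ) = 0 := by simp [vnorm2]
    rw [hz1, hz2]
    simp
  · set t := vnorm2 v with ht
    set x : k → ℝ := (Real.sqrt t)⁻¹ • v with hx
    have hst : Real.sqrt t > 0 := Real.sqrt_pos.mpr h0
    have hxn : ∑ j, x j ^ 2 = 1 := by
      have : vnorm2 x = ((Real.sqrt t)⁻¹)^2 * vnorm2 v := vnorm2_smul _ _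
      have h2 : ((Real.sqrt t)⁻¹)^2 = t⁻¹ := by
        rw [← Real.sqrt_inv]
        exact Real.sq_sqrt (inv_nonneg.mpr (le_of_lt h0))
      have h3 : vnorm2 x = 1 := by
        rw [this, h2, ← ht]
        field_simp
      exact h3
    have hub := specNorm_ge A hxn
    have hAx : A *ᵥ x = (Real.sqrt t)⁻¹ • (A *ᵥ v) := by
      rw [hx, Matrix.mulVec_smul]
    have h4 : vnorm2 (A *ᵥ x) = t⁻¹ * vnorm2 (A *ᵥ v) := by
      rw [hAx, vnorm2_smul, ← Real.sqrt_inv, Real.sq_sqrt (inv_nonneg.mpr (le_of_lt h0))]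
    have h5 : Real.sqrt (vnorm2 (A *ᵥ x)) ≤ specNorm A := hub
    have h6 : vnorm2 (A *ᵥ x) ≤ (specNorm A)^2 := by
      have := pow_le_pow_left₀ (Real.sqrt_nonneg _) h5 2
      rwa [Real.sq_sqrt (vnorm2_nonneg _)] at this
    rw [h4] at h6
    calc vnorm2 (A *ᵥ v) = t * (t⁻¹ * vnorm2 (A *ᵥ v)) := by
          field_simp
    _ ≤ t * (specNorm A)^2 := mul_le_mul_of_nonneg_left h6 (le_of_lt h0)
    _ = (specNorm A)^2 * t := by ring

end Spec

lemma frobNorm_zero : frobNorm (0 : Matrix m k ℝ) = 0 := by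
  simp [frobNorm]

lemma frobNorm_le_of_entry_sq {X Z : Matrix m k ℝ} (h : ∀ i j, (X i j)^2 ≤ (Z i j)^2) :
    frobNorm X ≤ frobNorm Z := by
  rw [frobNorm, frobNorm]
  apply Real.sqrt_le_sqrt
  exact Finset.sum_le_sum fun i _ => Finset.sum_le_sum fun j _ => h i j

def rowMask {n r : ℕ} (s : Finset (Fin n)) (U : Matrix (Fin n) (Fin r) ℝ) :
    Matrix (Fin n) (Fin r) ℝ :=
  Matrix.of fun i j => if i ∈ s then U i j else 0

lemma rowMask_mul_apply {n r : ℕ} (s t : Finset (Fin n)) (U V : Matrix (Fin n) (Fin r) ℝ)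
    (i j : Fin n) :
    (rowMask s U * (rowMask t V)ᵀ) i j = if i ∈ s ∧ j ∈ t then (U * Vᵀ) i j else 0 := by
  simp only [Matrix.mul_apply, rowMask, Matrix.transpose_apply, Matrix.of_apply]
  by_cases hi : i ∈ s <;> by_cases hj : j ∈ t <;>
    simp [hi, hj]

lemma rowMask_mulVec_apply {n r : ℕ} (s : Finset (Fin n)) (U : Matrix (Fin n) (Fin r) ℝ)
    (x : Fin r → ℝ) (i : Fin n) :
    (rowMask s U *ᵥ x) i = if i ∈ s then ∑ j, U i j * x j else 0 := by
  simp only [Matrix.mulVec, dotProduct, rowMask, Matrix.of_apply]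
  by_cases hi : i ∈ s <;> simp [hi]

lemma rowMask_vnorm2_mulVec {n r : ℕ} (s : Finset (Fin n)) (U : Matrix (Fin n) (Fin r) ℝ)
    (x : Fin r → ℝ) :
    vnorm2 (rowMask s U *ᵥ x) = ∑ i ∈ s, (∑ j, U i j * x j)^2 := by
  unfold vnorm2
  have e : ∀ i, ((rowMask s U *ᵥ x) i)^2 =
      if i ∈ s then (∑ j, U i j * x j)^2 else 0 := by
    intro i
    rw [rowMask_mulVec_apply]
    by_cases hi : i ∈ s <;> simp [hi]
  simp_rw [e]
  rw [Finset.sum_ite_mem, Finset.univ_inter]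

lemma rowMask_mul_mat_apply {n r : ℕ} (s : Finset (Fin n)) (U : Matrix (Fin n) (Fin r) ℝ)
    (Q : Matrix (Fin r) (Fin r) ℝ) (i : Fin n) (j : Fin r) :
    (rowMask s U * Q) i j = if i ∈ s then (U * Q) i j else 0 := by
  simp only [Matrix.mul_apply, rowMask, Matrix.of_apply]
  by_cases hi : i ∈ s <;> simp [hi]

end St11

open St11

/-- under Assumption 3, every global minimizer `U` of `F` satisfies
`‖U − U* Q‖_F ≤ (c₀/λ)‖Δ‖_F` for some orthogonal `Q`. -/
theorem statement11 {n r : ℕ} (hn : 0 < n) (hr : 0 < r) (hrn : r ≤ n)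
    (Ustar : Matrix (Fin n) (Fin r) ℝ) (Δ : Matrix (Fin n) (Fin n) ℝ)
    (K : ℕ) (hK : 0 < K) (I : Fin K → Finset (Fin n)) (lam : ℝ) (hlam : 0 < lam)
    (hA3 : Assumption3 Ustar (reluSet (Ustar * Ustarᵀ + Δ)) K I lam)
    (U : Matrix (Fin n) (Fin r) ℝ)
    (hopt : ∀ W : Matrix (Fin n) (Fin r) ℝ,
      objF (reluSet (Ustar * Ustarᵀ + Δ)) (Ustar * Ustarᵀ + Δ) U ≤
        objF (reluSet (Ustar * Ustarᵀ + Δ)) (Ustar * Ustarᵀ + Δ) W) :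
    ∃ Q : Matrix (Fin r) (Fin r) ℝ, Qᵀ * Q = 1 ∧
      frobNorm (U - Ustar * Q) ≤ (cZero K lam Ustar Δ / lam) * frobNorm Δ := by
  classical
  obtain ⟨hcover, hdiag, hlb0, hconn⟩ := hA3
  set M : Matrix (Fin n) (Fin n) ℝ := Ustar * Ustarᵀ + Δ with hM
  set Ω : Set (Fin n × Fin n) := reluSet M with hΩ
  set d : ℝ := frobNorm Δ with hd
  have hd0 : 0 ≤ d := frobNorm_nonneg Δ
  haveI : Nonempty (Fin r) := ⟨⟨0, hr⟩⟩
  set S : ℝ := specNorm Ustar with hS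
  have hSpec : OB Ustar S := OB_specNorm Ustar
  have hS0 : 0 ≤ S := hSpec.1
  have hsl : 0 < Real.sqrt lam := Real.sqrt_pos.mpr hlam
  have hll : Real.sqrt lam * Real.sqrt lam = lam := Real.mul_self_sqrt hlam.le
  -- optimality: masked residual bound
  have hopt1 : frobNorm (mask Ω (U * Uᵀ - M)) ≤ d := by
    have h4 := hopt Ustar
    rw [objF, objF] at h4
    have h5 : frobNorm (mask Ω (U * Uᵀ - M)) ≤ frobNorm (mask Ω (Ustar * Ustarᵀ - M)) := by
      nlinarith [frobNorm_nonneg (mask Ω (U * Uᵀ - M)),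
        frobNorm_nonneg (mask Ω (Ustar * Ustarᵀ - M))]
    have h6 : Ustar * Ustarᵀ - M = -Δ := by rw [hM]; abel
    have h7 : frobNorm (mask Ω (-Δ)) ≤ d := by
      rw [hd]
      apply frobNorm_le_of_entry_sq
      intro i j
      by_cases hij : (i, j) ∈ Ω <;> simp [mask, hij] <;> positivity
    calc frobNorm (mask Ω (U * Uᵀ - M)) ≤ frobNorm (mask Ω (Ustar * Ustarᵀ - M)) := h5
    _ = frobNorm (mask Ω (-Δ)) := by rw [h6]
    _ ≤ d := h7
  -- blocks
  set A : Fin K → Matrix (Fin n) (Fin r) ℝ := fun k => rowMask (I k) U with hA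
  set B : Fin K → Matrix (Fin n) (Fin r) ℝ := fun k => rowMask (I k) Ustar with hB
  have hlbB : ∀ kk : Fin K, ∀ x : Fin r → ℝ, lam * vnorm2 x ≤ vnorm2 (B kk *ᵥ x) := by
    intro kk x
    rw [hB]
    rw [rowMask_vnorm2_mulVec]
    exact hlb0 kk x
  have hOBB : ∀ kk : Fin K, OB (B kk) S := by
    intro kk
    refine ⟨hS0, fun v => ?_⟩
    have e1 : vnorm2 (B kk *ᵥ v) = ∑ i ∈ I kk, (∑ j, Ustar i j * v j)^2 := by
      rw [hB]; exact rowMask_vnorm2_mulVec _ _ _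
    have e2 : vnorm2 (Ustar *ᵥ v) = ∑ i, (∑ j, Ustar i j * v j)^2 := rfl
    calc vnorm2 (B kk *ᵥ v) = ∑ i ∈ I kk, (∑ j, Ustar i j * v j)^2 := e1
    _ ≤ ∑ i, (∑ j, Ustar i j * v j)^2 :=
        Finset.sum_le_sum_of_subset_of_nonneg (Finset.subset_univ _)
          (fun i _ _ => sq_nonneg _)
    _ = vnorm2 (Ustar *ᵥ v) := e2.symm
    _ ≤ S^2 * vnorm2 v := hSpec.2 v
  set ε : ℝ := 2*d with hε
  have hε0 : 0 ≤ ε := by rw [hε]; linarith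
  -- cross-block residual bound
  have hcrossb : ∀ kk ll : Fin K, (∀ a ∈ I kk, ∀ b ∈ I ll, (a, b) ∈ Ω) →
      frobNorm (A kk * (A ll)ᵀ - B kk * (B ll)ᵀ) ≤ ε := by
    intro kk ll hob
    have hid : A kk * (A ll)ᵀ - B kk * (B ll)ᵀ =
        (Matrix.of fun i j => if i ∈ I kk ∧ j ∈ I ll then (U * Uᵀ - M) i j else 0) +
        (Matrix.of fun i j => if i ∈ I kk ∧ j ∈ I ll then Δ i j else 0) := by
      ext i j
      rw [Matrix.sub_apply, Matrix.add_apply, hA, hB]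
      rw [rowMask_mul_apply, rowMask_mul_apply]
      simp only [Matrix.of_apply]
      by_cases hc : i ∈ I kk ∧ j ∈ I ll
      · rw [if_pos hc, if_pos hc, if_pos hc, if_pos hc]
        rw [hM]
        simp only [Matrix.sub_apply, Matrix.add_apply]
        ring
      · rw [if_neg hc, if_neg hc, if_neg hc, if_neg hc]
        ring
    rw [hid, hε]
    have hX : frobNorm (Matrix.of fun i j =>
        if i ∈ I kk ∧ j ∈ I ll then (U * Uᵀ - M) i j else 0) ≤ d := by
      calc frobNorm _ ≤ frobNorm (mask Ω (U * Uᵀ - M)) := by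
            apply frobNorm_le_of_entry_sq
            intro i j
            simp only [Matrix.of_apply, mask]
            by_cases hc : i ∈ I kk ∧ j ∈ I ll
            · rw [if_pos hc, if_pos (hob i hc.1 j hc.2)]
            · rw [if_neg hc]
              by_cases hw : (i,j) ∈ Ω <;> simp [hw] <;> positivity
      _ ≤ d := hopt1
    have hY : frobNorm (Matrix.of fun i j =>
        if i ∈ I kk ∧ j ∈ I ll then Δ i j else 0) ≤ d := by
      rw [hd]
      apply frobNorm_le_of_entry_sq
      intro i j
      simp only [Matrix.of_apply]
      by_cases hc : i ∈ I kk ∧ j ∈ I ll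
      · rw [if_pos hc]
      · rw [if_neg hc]
        nlinarith [sq_nonneg (Δ i j)]
    calc frobNorm (_ + _) ≤ _ + _ := frobNorm_add_le _ _
    _ ≤ d + d := add_le_add hX hY
    _ = 2 * d := by ring
  have hdiagb : ∀ kk : Fin K, frobNorm (A kk * (A kk)ᵀ - B kk * (B kk)ᵀ) ≤ ε :=
    fun kk => hcrossb kk kk (hdiag kk)
  -- per-block procrustes
  have hQex : ∀ kk : Fin K, ∃ Q : Matrix (Fin r) (Fin r) ℝ, Qᵀ * Q = 1 ∧
      frobNorm (pinvR (B kk) (A kk) - Q) ≤ ε/lam ∧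
      frobNorm (A kk - B kk * Q) ≤ Real.sqrt 2 * ε / Real.sqrt lam + S * (ε / lam) :=
    fun kk => block_procrustes hlam (hlbB kk) (hOBB kk) (A kk) (hdiagb kk)
  choose Qf hQf1 hQf2 hQf3 using hQex
  set α : ℝ := 3*(ε/lam) + (ε/lam)^2 with hα
  have hel : 0 ≤ ε/lam := div_nonneg hε0 hlam.le
  have hα0 : 0 ≤ α := by rw [hα]; nlinarith [hel, sq_nonneg (ε/lam)]
  -- the block graph
  let G : SimpleGraph (Fin K) :=
    { Adj := fun kk ll => kk ≠ ll ∧ ((∀ a ∈ I kk, ∀ b ∈ I ll, (a, b) ∈ Ω) ∨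
        (∀ a ∈ I ll, ∀ b ∈ I kk, (a, b) ∈ Ω))
      symm := by
        constructor
        intro a b h
        exact ⟨h.1.symm, h.2.symm⟩
      loopless := ⟨fun a h => h.1 rfl⟩ }
  have hedge : ∀ a b : Fin K, G.Adj a b → frobNorm (Qf a - Qf b) ≤ α := by
    intro a b h
    rcases h.2 with hok | hok
    · have := align_bound hlam (hlbB a) (hlbB b) hε0 (hdiagb a) (hcrossb a b hok)
        (hQf1 a) (hQf1 b) (hQf2 a) (hQf2 b)
      rw [hα]; exact this
    · have := align_bound hlam (hlbB b) (hlbB a) hε0 (hdiagb b) (hcrossb b a hok)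
        (hQf1 b) (hQf1 a) (hQf2 b) (hQf2 a)
      rw [hα, ← frobNorm_neg, neg_sub]
      exact this
  have hwalk : ∀ (a b : Fin K) (w : G.Walk a b),
      frobNorm (Qf a - Qf b) ≤ (w.length : ℝ) * α := by
    intro a b w
    induction w with
    | nil =>
      simp only [SimpleGraph.Walk.length_nil, Nat.cast_zero, zero_mul, sub_self]
      rw [frobNorm_zero]
    | @cons u v b' h p ih =>
      have htr : frobNorm (Qf u - Qf b') ≤ frobNorm (Qf u - Qf v) + frobNorm (Qf v - Qf b') := by
        have : Qf u - Qf b' = (Qf u - Qf v) + (Qf v - Qf b') := by abel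
        rw [this]
        exact frobNorm_add_le _ _
      have hlen : ((SimpleGraph.Walk.cons h p).length : ℝ) = (p.length : ℝ) + 1 := by
        rw [SimpleGraph.Walk.length_cons]
        push_cast
        ring
      rw [hlen]
      have := hedge u v h
      calc frobNorm (Qf u - Qf b') ≤ frobNorm (Qf u - Qf v) + frobNorm (Qf v - Qf b') := htr
      _ ≤ α + (p.length : ℝ) * α := add_le_add this ih
      _ = ((p.length : ℝ) + 1) * α := by ring
  -- connectivity
  have hreach : ∀ a b : Fin K, G.Reachable a b := by
    have aux : ∀ (s : ℕ) (p : Fin (s+1) → Fin K),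
        (∀ j : Fin s, ∀ a ∈ I (p j.castSucc), ∀ b ∈ I (p j.succ), (a, b) ∈ Ω) →
        G.Reachable (p 0) (p (Fin.last s)) := by
      intro s
      induction s with
      | zero =>
        intro p _
        exact SimpleGraph.Reachable.refl _
      | succ s ih =>
        intro p hp
        have h1 : G.Reachable (p 0) (p (Fin.last s).castSucc) := by
          have hq : ∀ j : Fin s, ∀ a ∈ I (p (j.castSucc).castSucc),
              ∀ b ∈ I (p (j.succ).castSucc), (a, b) ∈ Ω := by
            intro j
            have hthis := hp j.castSucc
            rwa [Fin.succ_castSucc] at hthis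
          have h2 := ih (fun j => p j.castSucc) (fun j => hq j)
          simpa using h2
        have h2 : G.Reachable (p (Fin.last s).castSucc) (p (Fin.last (s+1))) := by
          have hstep := hp (Fin.last s)
          have hlast : (Fin.last s).succ = Fin.last (s+1) := Fin.succ_last s
          rw [← hlast]
          rcases eq_or_ne (p (Fin.last s).castSucc) (p (Fin.last s).succ) with he | hne2
          · rw [he]
          · exact SimpleGraph.Adj.reachable ⟨hne2, Or.inl hstep⟩
        exact h1.trans h2
    intro a b
    rcases eq_or_ne a b with rfl | hne
    · exact SimpleGraph.Reachable.refl _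
    obtain ⟨s, p, hp0, hplast, hpstep⟩ := hconn a b hne
    have := aux s p (fun j => hpstep j)
    rw [hp0, hplast] at this
    exact this
  set k0 : Fin K := ⟨0, hK⟩ with hk0
  have hQdist : ∀ kk : Fin K, frobNorm (Qf kk - Qf k0) ≤ (K : ℝ) * α := by
    intro kk
    obtain ⟨w⟩ := hreach kk k0
    have hlen : ((w.bypass.length : ℕ) : ℝ) ≤ (K : ℝ) := by
      have h1 : w.bypass.length < Fintype.card (Fin K) := w.bypass_isPath.length_lt
      rw [Fintype.card_fin] at h1
      exact_mod_cast le_of_lt h1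
    calc frobNorm (Qf kk - Qf k0) ≤ (w.bypass.length : ℝ) * α := hwalk _ _ w.bypass
    _ ≤ (K : ℝ) * α := mul_le_mul_of_nonneg_right hlen hα0
  -- assemble
  set β : ℝ := Real.sqrt 2 * ε / Real.sqrt lam + S * (ε / lam) + S * ((K : ℝ) * α) with hβ
  have hβ0 : 0 ≤ β := by
    rw [hβ]
    have h1 : 0 ≤ Real.sqrt 2 * ε / Real.sqrt lam :=
      div_nonneg (mul_nonneg (Real.sqrt_nonneg _) hε0) (Real.sqrt_nonneg _)
    have h2 : 0 ≤ S * (ε/lam) := mul_nonneg hS0 hel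
    have h3 : 0 ≤ S * ((K:ℝ)*α) := mul_nonneg hS0 (mul_nonneg (Nat.cast_nonneg K) hα0)
    linarith
  have hblock : ∀ kk : Fin K, frobNorm (A kk - B kk * Qf k0) ≤ β := by
    intro kk
    have hdec : A kk - B kk * Qf k0 = (A kk - B kk * Qf kk) + B kk * (Qf kk - Qf k0) := by
      rw [Matrix.mul_sub]; abel
    rw [hdec]
    have h1 := hQf3 kk
    have h2 : frobNorm (B kk * (Qf kk - Qf k0)) ≤ S * ((K:ℝ) * α) := by
      calc frobNorm (B kk * (Qf kk - Qf k0)) ≤ S * frobNorm (Qf kk - Qf k0) :=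
            (hOBB kk).frob_mul_left _
      _ ≤ S * ((K:ℝ) * α) := mul_le_mul_of_nonneg_left (hQdist kk) hS0
    calc frobNorm _ ≤ frobNorm (A kk - B kk * Qf kk) + frobNorm (B kk * (Qf kk - Qf k0)) :=
          frobNorm_add_le _ _
    _ ≤ β := by rw [hβ]; linarith
  refine ⟨Qf k0, hQf1 k0, ?_⟩
  set X : Matrix (Fin n) (Fin r) ℝ := U - Ustar * Qf k0 with hX
  -- row decomposition
  have hXsum : frobInner X X ≤ (K : ℝ) * β^2 := by
    rw [frobInner_self]
    have hstep1 : ∀ kk : Fin K, ∑ i ∈ I kk, ∑ j, (X i j)^2 ≤ β^2 := by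
      intro kk
      have h1 : ∑ i ∈ I kk, ∑ j, (X i j)^2 ≤ frobNorm (A kk - B kk * Qf k0)^2 := by
        rw [sq_frobNorm, frobInner_self]
        have he : ∀ i ∈ I kk, ∑ j, (X i j)^2 = ∑ j, ((A kk - B kk * Qf k0) i j)^2 := by
          intro i hi
          apply Finset.sum_congr rfl
          intro j _
          have hentry : (A kk - B kk * Qf k0) i j = X i j := by
            have e1 : A kk i j = U i j := by
              show (if i ∈ I kk then U i j else 0) = U i j
              rw [if_pos hi]
            have e2 : (B kk * Qf k0) i j = (Ustar * Qf k0) i j := by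
              have e3 := rowMask_mul_mat_apply (I kk) Ustar (Qf k0) i j
              rw [show B kk = rowMask (I kk) Ustar from rfl, e3, if_pos hi]
            rw [Matrix.sub_apply, e1, e2, hX, Matrix.sub_apply]
          rw [hentry]
        rw [Finset.sum_congr rfl he]
        exact Finset.sum_le_sum_of_subset_of_nonneg (Finset.subset_univ _)
          (fun i _ _ => Finset.sum_nonneg fun j _ => sq_nonneg _)
      calc ∑ i ∈ I kk, ∑ j, (X i j)^2 ≤ frobNorm (A kk - B kk * Qf k0)^2 := h1
      _ ≤ β^2 := pow_le_pow_left₀ (frobNorm_nonneg _) (hblock kk) 2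
    have hcov : ∀ i : Fin n, (∑ j, (X i j)^2) ≤
        ∑ kk : Fin K, if i ∈ I kk then (∑ j, (X i j)^2) else 0 := by
      intro i
      obtain ⟨k1, hk1⟩ := hcover i
      have h1 := Finset.single_le_sum
        (f := fun kk => if i ∈ I kk then (∑ j, (X i j)^2) else 0)
        (fun kk _ => by
          show (0:ℝ) ≤ if i ∈ I kk then (∑ j, (X i j)^2) else 0
          by_cases h : i ∈ I kk
          · rw [if_pos h]; exact Finset.sum_nonneg fun j _ => sq_nonneg _
          · rw [if_neg h])
        (Finset.mem_univ k1)
      have h2 : (if i ∈ I k1 then (∑ j, (X i j)^2) else 0) ≤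
          ∑ kk : Fin K, if i ∈ I kk then (∑ j, (X i j)^2) else 0 := h1
      rwa [if_pos hk1] at h2
    calc ∑ i, ∑ j, (X i j)^2
        ≤ ∑ i, ∑ kk : Fin K, if i ∈ I kk then (∑ j, (X i j)^2) else 0 :=
          Finset.sum_le_sum fun i _ => hcov i
    _ = ∑ kk : Fin K, ∑ i, if i ∈ I kk then (∑ j, (X i j)^2) else 0 := Finset.sum_comm
    _ = ∑ kk : Fin K, ∑ i ∈ I kk, ∑ j, (X i j)^2 := by
          apply Finset.sum_congr rfl
          intro kk _
          rw [Finset.sum_ite_mem, Finset.univ_inter]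
    _ ≤ ∑ kk : Fin K, β^2 := Finset.sum_le_sum fun kk _ => hstep1 kk
    _ = (K : ℝ) * β^2 := by
          rw [Finset.sum_const, Finset.card_univ, Fintype.card_fin, nsmul_eq_mul]
  have hsqK0 : (0:ℝ) ≤ Real.sqrt K := Real.sqrt_nonneg _
  have hfrob_le : frobNorm X ≤ Real.sqrt K * β := by
    apply frobNorm_le_of_sq_le (mul_nonneg hsqK0 hβ0)
    have : (Real.sqrt K * β)^2 = (K:ℝ) * β^2 := by
      rw [mul_pow, Real.sq_sqrt (Nat.cast_nonneg K)]
    rw [this]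
    exact hXsum
  -- final numeric bound
  set T : ℝ := Real.sqrt lam + 2 * Real.sqrt d + S + (K:ℝ) * S * (3 + (2 / lam) * d) with hT
  have hcZ : cZero K lam Ustar Δ = Real.sqrt (8 * (K:ℝ)) * T := by
    rw [cZero, hT, ← hd, ← hS]
  have hs8K : Real.sqrt (8 * (K:ℝ)) = Real.sqrt 8 * Real.sqrt K :=
    Real.sqrt_mul (by norm_num) _
  have h28 : (2:ℝ) ≤ Real.sqrt 8 := by
    have h4 : Real.sqrt 4 = 2 := by
      rw [show (4:ℝ) = 2^2 by norm_num, Real.sqrt_sq (by norm_num : (0:ℝ) ≤ 2)]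
    rw [← h4]
    exact Real.sqrt_le_sqrt (by norm_num)
  have hs80 : (0:ℝ) ≤ Real.sqrt 8 := by linarith
  have h8 : Real.sqrt 8 = 2 * Real.sqrt 2 := by
    rw [show (8:ℝ) = 2^2 * 2 by norm_num, Real.sqrt_mul (by positivity),
      Real.sqrt_sq (by norm_num : (0:ℝ) ≤ 2)]
  have hdl0 : 0 ≤ d / lam := div_nonneg hd0 hlam.le
  have hK0 : (0:ℝ) ≤ (K:ℝ) := Nat.cast_nonneg K
  -- A1 : first term equality
  have e1 : Real.sqrt lam * (d/lam) = d / Real.sqrt lam := by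
    rw [eq_div_iff (ne_of_gt hsl)]
    have e2 : Real.sqrt lam * (d / lam) * Real.sqrt lam =
        (Real.sqrt lam * Real.sqrt lam) * (d/lam) := by ring
    rw [e2, hll, mul_comm, div_mul_cancel₀ _ (ne_of_gt hlam)]
  have A1 : Real.sqrt 2 * ε / Real.sqrt lam = Real.sqrt 8 * Real.sqrt lam * (d / lam) := by
    rw [h8, hε, mul_assoc, e1]
    ring
  have key : β ≤ Real.sqrt 8 * T * (d / lam) := by
    have expandL : β = Real.sqrt 8 * Real.sqrt lam * (d/lam) +
        (2*(S*(d/lam)) + 6*((K:ℝ)*S*(d/lam)) + 4*((K:ℝ)*S*(d/lam)^2)) := by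
      rw [hβ, A1, hα, hε]
      ring
    have expandR : Real.sqrt 8 * T * (d/lam) = Real.sqrt 8 * Real.sqrt lam * (d/lam) +
        (Real.sqrt 8 * (2*(Real.sqrt d*(d/lam))) + Real.sqrt 8 * (S*(d/lam)) +
         3*Real.sqrt 8*((K:ℝ)*S*(d/lam)) + 2*Real.sqrt 8*((K:ℝ)*S*(d/lam)^2)) := by
      rw [hT]
      ring
    rw [expandL, expandR]
    have f2 : 2*(S*(d/lam)) ≤ Real.sqrt 8 * (S*(d/lam)) :=
      mul_le_mul_of_nonneg_right h28 (mul_nonneg hS0 hdl0)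
    have f3 : 6*((K:ℝ)*S*(d/lam)) ≤ 3*Real.sqrt 8*((K:ℝ)*S*(d/lam)) := by
      have h6 : (6:ℝ) ≤ 3*Real.sqrt 8 := by linarith
      exact mul_le_mul_of_nonneg_right h6 (mul_nonneg (mul_nonneg hK0 hS0) hdl0)
    have f4 : 4*((K:ℝ)*S*(d/lam)^2) ≤ 2*Real.sqrt 8*((K:ℝ)*S*(d/lam)^2) := by
      have h4' : (4:ℝ) ≤ 2*Real.sqrt 8 := by linarith
      exact mul_le_mul_of_nonneg_right h4' (mul_nonneg (mul_nonneg hK0 hS0) (sq_nonneg _))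
    have f5 : 0 ≤ Real.sqrt 8 * (2*(Real.sqrt d*(d/lam))) := by positivity
    linarith
  calc frobNorm X ≤ Real.sqrt K * β := hfrob_le
  _ ≤ Real.sqrt K * (Real.sqrt 8 * T * (d/lam)) := mul_le_mul_of_nonneg_left key hsqK0
  _ = (cZero K lam Ustar Δ / lam) * d := by
      rw [hcZ, hs8K]
      ring
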